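/- arXiv:1709.01962 — 6 statements merged into one kernel-verified Lean document; each statement's English description precedes it below -/
import Mathlib

section
/- Let d < c < e be reals and let F : [d,e] → ℝ be continuous, affine on [d,c] with slope of absolute value α > 0 and affine on [c,e] with slope of absolute value β > 0. If 1/α + 1/β < 1, then for every λ with 1/α + 1/β < λ < 1 and every segment [a,b] ⊆ [d,e] with a < b, one has b − a < λ·|F([a,b])|, where |F([a,b])| denotes the length (diameter) of the interval F([a,b]). -/
/-- Expansion lemma for a continuous map which is affine on `[d, c]` with slope of absolute
value `α` and affine on `[c, e]` with slope of absolute value `β`, where `1/α + 1/β < 1`: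
every subsegment `[a, b] ⊆ [d, e]` satisfies `b - a < λ · |F([a, b])|` for each
`λ ∈ (1/α + 1/β, 1)`, where `|F([a, b])|` is the length (diameter) of the image segment. -/
theorem two_slope_expansion
    (d c e α β : ℝ) (F : ℝ → ℝ)
    (hdc : d < c) (hce : c < e)
    (hα : 0 < α) (hβ : 0 < β)
    (hcont : ContinuousOn F (Set.Icc d e))
    (haff1 : ∃ m b₀ : ℝ, |m| = α ∧ ∀ x ∈ Set.Icc d c, F x = m * x + b₀)
    (haff2 : ∃ m b₀ : ℝ, |m| = β ∧ ∀ x ∈ Set.Icc c e, F x = m * x + b₀)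
    (hslope : 1 / α + 1 / β < 1) :
    ∀ lam : ℝ, 1 / α + 1 / β < lam → lam < 1 →
      ∀ a b : ℝ, d ≤ a → a < b → b ≤ e →
        b - a < lam * Metric.diam (F '' Set.Icc a b) := by
  obtain ⟨m₁, b₁, hm₁, hF₁⟩ := haff1
  obtain ⟨m₂, b₂, hm₂, hF₂⟩ := haff2
  intro lam hlam1 hlam2 a b hda hab hbe
  have hsub : Set.Icc a b ⊆ Set.Icc d e := Set.Icc_subset_Icc hda hbe
  set D := Metric.diam (F '' Set.Icc a b) with hD
  have hbd : Bornology.IsBounded (F '' Set.Icc a b) :=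
    (isCompact_Icc.image_of_continuousOn (hcont.mono hsub)).isBounded
  have hdiam : ∀ x ∈ Set.Icc a b, ∀ y ∈ Set.Icc a b, |F x - F y| ≤ D := by
    intro x hx y hy
    have := Metric.dist_le_diam_of_mem hbd ⟨x, hx, rfl⟩ ⟨y, hy, rfl⟩
    rwa [Real.dist_eq] at this
  have hlam0 : 0 < lam := lt_of_le_of_lt (by positivity) hlam1
  rcases le_or_gt b c with hbc | hcb
  · -- [a, b] ⊆ [d, c]
    have hFa : F a = m₁ * a + b₁ := hF₁ a ⟨hda, le_trans hab.le hbc⟩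
    have hFb : F b = m₁ * b + b₁ := hF₁ b ⟨le_trans hda hab.le, hbc⟩
    have hd1 : α * (b - a) ≤ D := by
      have h := hdiam b ⟨hab.le, le_refl b⟩ a ⟨le_refl a, hab.le⟩
      rw [hFb, hFa] at h
      calc α * (b - a) = |m₁| * |b - a| := by
            rw [hm₁, abs_of_nonneg (by linarith)]
        _ = |m₁ * b + b₁ - (m₁ * a + b₁)| := by rw [← abs_mul]; ring_nf
        _ ≤ D := h
    have h1α : 1 / α < lam := lt_of_le_of_lt (le_add_of_nonneg_right (by positivity)) hlam1
    have h1 : 1 < lam * α := (div_lt_iff₀ hα).mp h1α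
    nlinarith [mul_le_mul_of_nonneg_left hd1 hlam0.le]
  rcases le_or_gt c a with hca | hac
  · -- [a, b] ⊆ [c, e]
    have hFa : F a = m₂ * a + b₂ := hF₂ a ⟨hca, le_trans hab.le hbe⟩
    have hFb : F b = m₂ * b + b₂ := hF₂ b ⟨le_trans hca hab.le, hbe⟩
    have hd1 : β * (b - a) ≤ D := by
      have h := hdiam b ⟨hab.le, le_refl b⟩ a ⟨le_refl a, hab.le⟩
      rw [hFb, hFa] at h
      calc β * (b - a) = |m₂| * |b - a| := by
            rw [hm₂, abs_of_nonneg (by linarith)]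
        _ = |m₂ * b + b₂ - (m₂ * a + b₂)| := by rw [← abs_mul]; ring_nf
        _ ≤ D := h
    have h1β : 1 / β < lam := lt_of_le_of_lt (le_add_of_nonneg_left (by positivity)) hlam1
    have h1 : 1 < lam * β := (div_lt_iff₀ hβ).mp h1β
    nlinarith [mul_le_mul_of_nonneg_left hd1 hlam0.le]
  · -- a < c < b
    have hcmem : c ∈ Set.Icc a b := ⟨hac.le, hcb.le⟩
    have hFa : F a = m₁ * a + b₁ := hF₁ a ⟨hda, hac.le⟩
    have hFc : F c = m₁ * c + b₁ := hF₁ c ⟨hdc.le, le_refl c⟩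
    have hFc' : F c = m₂ * c + b₂ := hF₂ c ⟨le_refl c, hce.le⟩
    have hFb : F b = m₂ * b + b₂ := hF₂ b ⟨hcb.le, hbe⟩
    have hd1 : α * (c - a) ≤ D := by
      have h := hdiam c hcmem a ⟨le_refl a, hab.le⟩
      rw [hFc, hFa] at h
      calc α * (c - a) = |m₁| * |c - a| := by
            rw [hm₁, abs_of_nonneg (by linarith)]
        _ = |m₁ * c + b₁ - (m₁ * a + b₁)| := by rw [← abs_mul]; ring_nf
        _ ≤ D := h
    have hd2 : β * (b - c) ≤ D := by
      have h := hdiam b ⟨hab.le, le_refl b⟩ c hcmem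
      rw [hFb, hFc'] at h
      calc β * (b - c) = |m₂| * |b - c| := by
            rw [hm₂, abs_of_nonneg (by linarith)]
        _ = |m₂ * b + b₂ - (m₂ * c + b₂)| := by rw [← abs_mul]; ring_nf
        _ ≤ D := h
    have hDpos : 0 < D := lt_of_lt_of_le (by nlinarith) hd1
    have h1 : c - a ≤ D / α := (le_div_iff₀ hα).mpr (by linarith)
    have h2 : b - c ≤ D / β := (le_div_iff₀ hβ).mpr (by linarith)
    have h3 : (1 / α + 1 / β) * D < lam * D := mul_lt_mul_of_pos_right hlam1 hDpos
    have h4 : D / α + D / β = (1 / α + 1 / β) * D := by ring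
    linarith
end

section
/- Under the saw map setup, the segment J* = [0, p_{k*}] satisfies T(J*) = J*; in particular J* is invariant under T. -/
/-- `T` is affine (linear) on the segment `[a, b]`. -/
def AffOn (T : ℝ → ℝ) (a b : ℝ) : Prop :=
  ∃ m c : ℝ, ∀ x ∈ Set.Icc a b, T x = m * x + c

/-- The "saw map" setup: sequences `q, r, p`, the map `T`, fixed points `e k ∈ (q (k+1), r k)`
and `ehat k ∈ (r k, q k)`, and the index `kstar`, subject to all standing assumptions. -/
structure SawMapSetup where
  q : ℕ → ℝ
  r : ℕ → ℝ
  p : ℕ → ℝ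
  T : ℝ → ℝ
  e : ℕ → ℝ
  ehat : ℕ → ℝ
  kstar : ℕ
  hq_pos : ∀ k, 1 ≤ k → 0 < q k
  hr_pos : ∀ k, 0 < r k
  hq1r0 : q 1 < r 0
  hrq : ∀ k, 1 ≤ k → r k < q k
  hqr : ∀ k, 1 ≤ k → q (k + 1) < r k
  hq_lim : Filter.Tendsto q Filter.atTop (nhds 0)
  hr_lim : Filter.Tendsto r Filter.atTop (nhds 0)
  hp_pos : ∀ k, 0 < p k
  hp_dec : ∀ k, p (k + 1) < p k
  hp0r0 : p 0 < r 0
  hpr : ∀ k, 1 ≤ k → r k < p k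
  hT0 : T 0 = 0
  hTq : ∀ k, 1 ≤ k → T (q k) = 0
  hTr : ∀ k, T (r k) = p k
  haff0 : AffOn T (q 1) (r 0)
  haff1 : ∀ k, 1 ≤ k → AffOn T (q (k + 1)) (r k)
  haff2 : ∀ k, 1 ≤ k → AffOn T (r k) (q k)
  hTJ : Set.MapsTo T (Set.Icc 0 (r 0)) (Set.Icc 0 (r 0))
  halpha1 : ∀ k, 1 ≤ k → 1 < p k / (r k - q (k + 1))
  he_mem : ∀ k, 1 ≤ k → e k ∈ Set.Ioo (q (k + 1)) (r k)
  he_fix : ∀ k, 1 ≤ k → T (e k) = e k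
  he_uniq : ∀ k, 1 ≤ k → ∀ x ∈ Set.Ioo (q (k + 1)) (r k), T x = x → x = e k
  hehat_mem : ∀ k, 1 ≤ k → ehat k ∈ Set.Ioo (r k) (q k)
  hehat_fix : ∀ k, 1 ≤ k → T (ehat k) = ehat k
  hehat_uniq : ∀ k, 1 ≤ k → ∀ x ∈ Set.Ioo (r k) (q k), T x = x → x = ehat k
  halpha_mono : ∀ k, p k / (r k - q (k + 1)) < p (k + 1) / (r (k + 1) - q (k + 2))
  hbeta_mono : ∀ k, 1 ≤ k → p k / (q k - r k) < p (k + 1) / (q (k + 1) - r (k + 1))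
  hkstar : 1 ≤ kstar
  hp_e_big : ∀ k, kstar + 1 ≤ k → e (k - 1) < p k
  hp_e_small : 2 ≤ kstar → ∀ k, 2 ≤ k → k ≤ kstar → p k < e (k - 1)
  htech : ∀ k, 1 ≤ k → k < kstar → p k < q k + e k / (p (k - 1) / (r (k - 1) - q k))

namespace SawMapSetup

variable (S : SawMapSetup)

/-- Absolute value of the slope of `T` on `[q (k+1), r k]`. -/
noncomputable def alpha (k : ℕ) : ℝ := S.p k / (S.r k - S.q (k + 1))

/-- Absolute value of the slope of `T` on `[r k, q k]`. -/
noncomputable def beta (k : ℕ) : ℝ := S.p k / (S.q k - S.r k)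

/-- The invariant segment `J* = [0, p kstar]`. -/
def Jstar : Set ℝ := Set.Icc 0 (S.p S.kstar)

/-- The segment `J_k = [e k, p k]`. -/
def Jk (k : ℕ) : Set ℝ := Set.Icc (S.e k) (S.p k)

/-- The segment `G_k = [T (p k), p k]`. -/
def Gk (k : ℕ) : Set ℝ := Set.Icc (S.T (S.p k)) (S.p k)

/-- The set `Ω` of points of `J*` that are eventually mapped to `0`. -/
def Omega : Set ℝ := {x | x ∈ S.Jstar ∧ ∃ n, 1 ≤ n ∧ S.T^[n] x = 0}

/-- The set `Σ`, the closure of `Ω`. -/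
def Sig : Set ℝ := closure S.Omega

end SawMapSetup

namespace SawHelper

open SawMapSetup

lemma q_anti (S : SawMapSetup) : ∀ i j : ℕ, 1 ≤ i → i ≤ j → S.q j ≤ S.q i := by
  intro i j hi hij
  induction j with
  | zero => omega
  | succ n ih =>
    rcases Nat.lt_or_ge i (n+1) with h | h
    · have hn : i ≤ n := by omega
      have h1 : 1 ≤ n := by omega
      have : S.q (n+1) < S.q n := lt_trans (S.hqr n h1) (S.hrq n h1)
      exact le_trans this.le (ih hn)
    · have : i = n + 1 := by omega
      rw [this]

lemma p_anti (S : SawMapSetup) : ∀ i j : ℕ, i ≤ j → S.p j ≤ S.p i := by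
  intro i j hij
  induction j with
  | zero => simp_all
  | succ n ih =>
    rcases Nat.lt_or_ge i (n+1) with h | h
    · exact le_trans (S.hp_dec n).le (ih (by omega))
    · have : i = n + 1 := by omega
      rw [this]

/-- On a segment where `T` is affine, `T x` is at most the max of endpoint values. -/
lemma aff_le_max {T : ℝ → ℝ} {a b : ℝ} (h : AffOn T a b) (hab : a ≤ b) {x : ℝ}
    (hx : x ∈ Set.Icc a b) : T x ≤ max (T a) (T b) := by
  obtain ⟨m, c, hmc⟩ := h
  rw [hmc x hx, hmc a ⟨le_refl a, hab⟩, hmc b ⟨hab, le_refl b⟩]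
  rcases le_total 0 m with hm | hm
  · exact le_max_of_le_right (by nlinarith [hx.2])
  · exact le_max_of_le_left (by nlinarith [hx.1])

/-- On the teeth `[q (k+1), q k]` (for `k ≥ 1`), `T` is bounded by `p k`. -/
lemma Tx_le_pk (S : SawMapSetup) (k : ℕ) (hk : 1 ≤ k) {x : ℝ}
    (hx1 : S.q (k+1) ≤ x) (hx2 : x ≤ S.q k) : S.T x ≤ S.p k := by
  have hp := S.hp_pos k
  rcases le_total x (S.r k) with h | h
  · have := aff_le_max (S.haff1 k hk) (S.hqr k hk).le ⟨hx1, h⟩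
    rw [S.hTq (k+1) (by omega), S.hTr k] at this
    simpa [max_le_iff, hp.le] using this
  · have := aff_le_max (S.haff2 k hk) (S.hrq k hk).le ⟨h, hx2⟩
    rw [S.hTq k hk, S.hTr k] at this
    simpa [max_le_iff, hp.le] using this

/-- On `[q kstar, p kstar]`, `T x ≤ x` (hence `≤ p kstar`). -/
lemma Tx_le_x (S : SawMapSetup) {x : ℝ} (hx1 : S.q S.kstar ≤ x)
    (hx2 : x ≤ S.p S.kstar) : S.T x ≤ x := by
  have hks := S.hkstar
  rcases Nat.lt_or_ge S.kstar 2 with h2 | h2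
  · -- kstar = 1
    have hk1 : S.kstar = 1 := by omega
    rw [hk1] at hx1 hx2
    obtain ⟨m, c, hmc⟩ := S.haff0
    have hpr0 : S.p 1 < S.r 0 := lt_trans (S.hp_dec 0) S.hp0r0
    have hxr : x ≤ S.r 0 := le_trans hx2 hpr0.le
    have hq1 : S.q 1 ≤ S.r 0 := S.hq1r0.le
    have e1 : m * S.q 1 + c = 0 := by
      rw [← hmc (S.q 1) ⟨le_refl _, hq1⟩]; exact S.hTq 1 le_rfl
    have e2 : m * S.r 0 + c = S.p 0 := by
      rw [← hmc (S.r 0) ⟨hq1, le_refl _⟩]; exact S.hTr 0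
    rw [hmc x ⟨hx1, hxr⟩]
    have hq1pos := S.hq_pos 1 le_rfl
    rcases le_total m 1 with hm | hm
    · nlinarith [mul_nonneg (by linarith : (0:ℝ) ≤ 1 - m) (by linarith : 0 ≤ x - S.q 1)]
    · nlinarith [mul_nonneg (by linarith : (0:ℝ) ≤ m - 1) (by linarith : 0 ≤ S.r 0 - x), S.hp0r0]
  · -- kstar ≥ 2
    have hk1 : 1 ≤ S.kstar - 1 := by omega
    have hsucc : S.kstar - 1 + 1 = S.kstar := by omega
    obtain ⟨m, c, hmc⟩ := S.haff1 (S.kstar - 1) hk1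
    rw [hsucc] at hmc
    set e := S.e (S.kstar - 1) with he
    have hemem := S.he_mem (S.kstar - 1) hk1
    rw [hsucc] at hemem
    have hpe : S.p S.kstar < e := S.hp_e_small h2 S.kstar h2 le_rfl
    have hxr : x ≤ S.r (S.kstar - 1) := le_trans hx2 (lt_trans hpe hemem.2).le
    have hqr : S.q S.kstar ≤ S.r (S.kstar - 1) := (lt_trans hemem.1 hemem.2).le
    have e1 : m * S.q S.kstar + c = 0 := by
      rw [← hmc (S.q S.kstar) ⟨le_refl _, hqr⟩]; exact S.hTq S.kstar hks
    have e2 : m * e + c = e := by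
      rw [← hmc e ⟨hemem.1.le, hemem.2.le⟩]; exact S.he_fix (S.kstar - 1) hk1
    have hqpos := S.hq_pos S.kstar hks
    have hm1 : 1 < m := by nlinarith [hemem.1]
    rw [hmc x ⟨hx1, hxr⟩]
    nlinarith [mul_nonneg (by linarith : (0:ℝ) ≤ m - 1) (by linarith : 0 ≤ e - x)]

lemma mapsTo (S : SawMapSetup) : Set.MapsTo S.T S.Jstar S.Jstar := by
  intro x hx
  obtain ⟨hx0, hxp⟩ := hx
  have hks := S.hkstar
  have hpr0 : S.p S.kstar < S.r 0 := lt_of_le_of_lt (p_anti S 0 S.kstar (by omega)) S.hp0r0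
  have hT0 : 0 ≤ S.T x := (S.hTJ ⟨hx0, le_trans hxp hpr0.le⟩).1
  refine ⟨hT0, ?_⟩
  rcases eq_or_lt_of_le hx0 with h0 | h0
  · rw [← h0, S.hT0]; exact (S.hp_pos S.kstar).le
  rcases le_total (S.q S.kstar) x with hq | hq
  · exact le_trans (Tx_le_x S hq hxp) hxp
  · -- x < q kstar : find the tooth containing x
    have hev : ∃ n : ℕ, S.q (n + 1) < x := by
      obtain ⟨n, hn1, hn2⟩ :=
        ((S.hq_lim.eventually (gt_mem_nhds h0)).and (Filter.eventually_ge_atTop 1)).exists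
      exact ⟨n - 1, by rwa [Nat.sub_add_cancel hn2]⟩
    classical
    set n0 := Nat.find hev with hn0
    have hlt : S.q (n0 + 1) < x := Nat.find_spec hev
    have hn0k : S.kstar ≤ n0 := by
      by_contra hcon
      push_neg at hcon
      have : S.q S.kstar ≤ S.q (n0 + 1) := q_anti S (n0 + 1) S.kstar (by omega) (by omega)
      linarith
    have hge : x ≤ S.q n0 := by
      rcases Nat.eq_zero_or_pos n0 with hz | hpos
      · omega
      · have := Nat.find_min hev (m := n0 - 1) (by omega)
        push_neg at this
        rwa [Nat.sub_add_cancel hpos] at this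
    have := Tx_le_pk S n0 (by omega) hlt.le hge
    exact le_trans this (p_anti S S.kstar n0 hn0k)

lemma surjOn (S : SawMapSetup) : S.Jstar ⊆ S.T '' S.Jstar := by
  intro y hy
  obtain ⟨hy0, hyp⟩ := hy
  have hks := S.hkstar
  obtain ⟨m, c, hmc⟩ := S.haff1 S.kstar hks
  have hqr : S.q (S.kstar + 1) < S.r S.kstar := S.hqr S.kstar hks
  have e1 : m * S.q (S.kstar + 1) + c = 0 := by
    rw [← hmc (S.q (S.kstar + 1)) ⟨le_refl _, hqr.le⟩]; exact S.hTq (S.kstar + 1) (by omega)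
  have e2 : m * S.r S.kstar + c = S.p S.kstar := by
    rw [← hmc (S.r S.kstar) ⟨hqr.le, le_refl _⟩]; exact S.hTr S.kstar
  have hp := S.hp_pos S.kstar
  have hm : 0 < m := by nlinarith
  refine ⟨(y - c) / m, ?_, ?_⟩
  · have hxq : S.q (S.kstar + 1) ≤ (y - c) / m := by
      rw [le_div_iff₀ hm]; nlinarith
    have hxr : (y - c) / m ≤ S.r S.kstar := by
      rw [div_le_iff₀ hm]; nlinarith
    have hq1 := S.hq_pos (S.kstar + 1) (by omega)
    exact ⟨by linarith, le_trans hxr (S.hpr S.kstar hks).le⟩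
  · have hxq : S.q (S.kstar + 1) ≤ (y - c) / m := by
      rw [le_div_iff₀ hm]; nlinarith
    have hxr : (y - c) / m ≤ S.r S.kstar := by
      rw [div_le_iff₀ hm]; nlinarith
    rw [hmc _ ⟨hxq, hxr⟩]
    field_simp
    ring

end SawHelper

/-- Under the saw map setup, `T(J*) = J*`; in particular `J*` is invariant under `T`. -/
theorem Jstar_invariant (S : SawMapSetup) :
    S.T '' S.Jstar = S.Jstar ∧ Set.MapsTo S.T S.Jstar S.Jstar := by
  have hm := SawHelper.mapsTo S
  exact ⟨le_antisymm (hm.image_subset) (SawHelper.surjOn S), hm⟩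
end

section
/- Under the saw map setup, for every γ with 0 < γ < p_{k*} (so that [0,γ] is a proper subsegment of J* containing 0), one has [0, γ] ⊆ T([0, γ]). -/
/-- Under the saw map setup, for every `γ` with `0 < γ < p kstar` one has
`[0, γ] ⊆ T([0, γ])`. -/
theorem subsegment_expansion (S : SawMapSetup) :
    ∀ γ : ℝ, 0 < γ → γ < S.p S.kstar →
      Set.Icc 0 γ ⊆ S.T '' Set.Icc 0 γ := by
  intro γ hγ0 hγp
  classical
  have hpanti : StrictAnti S.p := strictAnti_nat_of_succ_lt S.hp_dec
  have hex : ∃ k, S.r k < γ := (S.hr_lim.eventually_lt_const hγ0).exists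
  set k := Nat.find hex with hkdef
  have hk : S.r k < γ := Nat.find_spec hex
  have hmin : ∀ j, j < k → γ ≤ S.r j := by
    intro j hj
    have := Nat.find_min hex hj
    linarith [not_lt.mp this]
  have hk1 : 1 ≤ k := by
    by_contra h
    have hk0 : k = 0 := by omega
    have h1 : S.p S.kstar ≤ S.p 0 := hpanti.antitone (Nat.zero_le _)
    have := hk; rw [hk0] at this
    linarith [S.hp0r0]
  clear_value k
  by_cases hcase : γ ≤ S.p k
  · -- use the branch [q (k+1), r k]
    have hq1 : 0 < S.q (k + 1) := S.hq_pos (k + 1) (by omega)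
    have hqrk : S.q (k + 1) < S.r k := S.hqr k hk1
    obtain ⟨m, c, haff⟩ := S.haff1 k hk1
    have hcont : ContinuousOn S.T (Set.Icc (S.q (k + 1)) (S.r k)) := by
      have : Continuous fun x : ℝ => m * x + c := by continuity
      exact this.continuousOn.congr haff
    have hivt := intermediate_value_Icc hqrk.le hcont
    rw [S.hTq (k + 1) (by omega), S.hTr k] at hivt
    intro x hx
    have hx' : x ∈ Set.Icc (0 : ℝ) (S.p k) := ⟨hx.1, le_trans hx.2 hcase⟩
    have := hivt hx'
    exact Set.image_mono (f := S.T) (Set.Icc_subset_Icc hq1.le hk.le) this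
  · -- γ > p k, hence k > kstar
    push_neg at hcase
    have hkk : S.kstar < k := by
      by_contra h
      have : S.p k ≥ S.p S.kstar := hpanti.antitone (not_lt.mp h)
      linarith
    have hks := S.hkstar
    obtain ⟨j, rfl⟩ : ∃ j, k = j + 1 := ⟨k - 1, by omega⟩
    have hj1 : 1 ≤ j := by omega
    have he : S.e j < S.p (j + 1) := by
      have := S.hp_e_big (j + 1) (by omega)
      simpa using this
    have he_mem := S.he_mem j hj1
    have hγe : S.e j < γ := lt_trans he hcase
    have hγr : γ ≤ S.r j := hmin j (by omega)
    obtain ⟨m, c, haff⟩ := S.haff1 j hj1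
    have hq_pos : 0 < S.q (j + 1) := S.hq_pos (j + 1) (by omega)
    have hqE : S.q (j + 1) < S.e j := he_mem.1
    have hEr : S.e j < S.r j := he_mem.2
    have hmemq : S.q (j + 1) ∈ Set.Icc (S.q (j + 1)) (S.r j) :=
      ⟨le_refl _, by linarith⟩
    have hmemE : S.e j ∈ Set.Icc (S.q (j + 1)) (S.r j) := ⟨hqE.le, hEr.le⟩
    have hmemγ : γ ∈ Set.Icc (S.q (j + 1)) (S.r j) := ⟨by linarith, hγr⟩
    have eq1 : m * S.q (j + 1) + c = 0 := by
      rw [← haff _ hmemq]; exact S.hTq (j + 1) (by omega)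
    have eq2 : m * S.e j + c = S.e j := by
      rw [← haff _ hmemE]; exact S.he_fix j hj1
    have eq3 : S.T γ = m * γ + c := haff _ hmemγ
    have hm : 1 < m := by nlinarith
    have hTγ : γ ≤ S.T γ := by nlinarith
    have hcont : ContinuousOn S.T (Set.Icc (S.q (j + 1)) γ) := by
      have hC : Continuous fun x : ℝ => m * x + c := by continuity
      exact hC.continuousOn.congr fun x hx =>
        haff x ⟨hx.1, le_trans hx.2 hγr⟩
    have hivt := intermediate_value_Icc (by linarith : S.q (j + 1) ≤ γ) hcont
    rw [S.hTq (j + 1) (by omega)] at hivt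
    intro x hx
    have hx' : x ∈ Set.Icc (0 : ℝ) (S.T γ) := ⟨hx.1, le_trans hx.2 hTγ⟩
    have := hivt hx'
    exact Set.image_mono (f := S.T) (Set.Icc_subset_Icc hq_pos.le le_rfl) this
end

section
/- Under the saw map setup, suppose x̂ ∈ J* satisfies Tⁿ(x̂) = x̂ for some n ≥ 1, and suppose there exists a < x̂ such that Tⁿ(a) = 0 and the iterate Tⁿ is affine on the segment [a, x̂]. Then x̂ ∈ Σ. -/
/-- Under the saw map setup, if `x̂ ∈ J*` is a periodic point (`T^[n] x̂ = x̂`, `n ≥ 1`) and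
there is `a < x̂` with `T^[n] a = 0` such that `T^[n]` is affine on `[a, x̂]`, then `x̂ ∈ Σ`. -/
theorem periodic_point_mem_Sig (S : SawMapSetup) (xhat : ℝ) (hx : xhat ∈ S.Jstar)
    (n : ℕ) (hn : 1 ≤ n) (hfix : S.T^[n] xhat = xhat)
    (a : ℝ) (ha : a < xhat) (haz : S.T^[n] a = 0) (haff : AffOn (S.T^[n]) a xhat) :
    xhat ∈ S.Sig := by
  rcases eq_or_lt_of_le hx.1 with h0 | hpos
  · exact subset_closure ⟨hx, n, hn, hfix.trans h0.symm⟩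
  obtain ⟨m, c, hmc⟩ := haff
  have hma : m * a + c = 0 := by rw [← hmc a ⟨le_rfl, ha.le⟩, haz]
  have hmx : m * xhat + c = xhat := by rw [← hmc xhat ⟨ha.le, le_rfl⟩, hfix]
  by_cases hA : 0 < a
  · -- main case: a > 0, slope m > 1
    have hsub : m * (xhat - a) = xhat := by nlinarith
    have hm1 : 1 < m := by nlinarith
    have hm0 : (0:ℝ) < m := by linarith
    set y : ℕ → ℝ := fun k => xhat - (xhat - a) / m ^ k with hy
    have hmem : ∀ k, y k ∈ Set.Icc a xhat := by
      intro k
      have hk1 : (1:ℝ) ≤ m ^ k := one_le_pow₀ hm1.le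
      have hk0 : (0:ℝ) < m ^ k := by positivity
      constructor
      · have : (xhat - a) / m ^ k ≤ xhat - a := div_le_self (by linarith) hk1
        simp only [hy]; linarith
      · have : 0 ≤ (xhat - a) / m ^ k := div_nonneg (by linarith) hk0.le
        simp only [hy]; linarith
    have hstep : ∀ k, S.T^[n] (y (k + 1)) = y k := by
      intro k
      rw [hmc _ (hmem (k + 1))]
      simp only [hy]
      have hdiv : m * ((xhat - a) / m ^ (k + 1)) = (xhat - a) / m ^ k := by
        rw [pow_succ]
        field_simp
      linear_combination hmx - hdiv
    have horb : ∀ k, S.T^[n * (k + 1)] (y k) = 0 := by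
      intro k
      induction k with
      | zero =>
        have : y 0 = a := by simp [hy]
        rw [this, Nat.mul_one]; exact haz
      | succ k ih =>
        rw [show n * (k + 1 + 1) = n * (k + 1) + n by ring,
          Function.iterate_add_apply, hstep k, ih]
    have homega : ∀ k, y k ∈ S.Omega := by
      intro k
      refine ⟨⟨le_trans hA.le (hmem k).1, le_trans (hmem k).2 hx.2⟩,
        n * (k + 1), ?_, horb k⟩
      calc 1 ≤ n := hn
        _ ≤ n * (k + 1) := Nat.le_mul_of_pos_right n (Nat.succ_pos k)
    have hty : Filter.Tendsto y Filter.atTop (nhds xhat) := by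
      have h1 : Filter.Tendsto (fun k : ℕ => (xhat - a) / m ^ k)
          Filter.atTop (nhds 0) := by
        have h2 : Filter.Tendsto (fun k : ℕ => (1 / m) ^ k)
            Filter.atTop (nhds 0) :=
          tendsto_pow_atTop_nhds_zero_of_lt_one (by positivity)
            (by rw [div_lt_one hm0]; exact hm1)
        have h3 : (fun k : ℕ => (xhat - a) / m ^ k)
            = fun k : ℕ => (xhat - a) * (1 / m) ^ k := by
          funext k
          rw [div_pow, one_pow]
          ring
        rw [h3]
        simpa using h2.const_mul (xhat - a)
      have := (tendsto_const_nhds (x := xhat) (f := Filter.atTop)).sub h1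
      simpa using this
    exact mem_closure_of_tendsto hty (Filter.Eventually.of_forall homega)
  · -- degenerate case: a ≤ 0, leads to contradiction
    exfalso
    push_neg at hA
    have hc0 : c = 0 := by
      have h0m : S.T^[n] 0 = 0 := Function.iterate_fixed S.hT0 n
      have := hmc 0 ⟨hA, hpos.le⟩
      rw [h0m] at this; linarith
    have hm1 : m = 1 := by
      have : m * xhat = xhat := by linarith
      have := mul_right_cancel₀ hpos.ne' (this.trans (one_mul xhat).symm)
      exact this
    obtain ⟨K, hK⟩ := ((S.hq_lim.eventually (gt_mem_nhds hpos)).and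
      (Filter.eventually_ge_atTop 1)).exists
    obtain ⟨hKx, hK1⟩ := hK
    have hqK : 0 < S.q K := S.hq_pos K hK1
    have h1 : S.T^[n] (S.q K) = S.q K := by
      rw [hmc (S.q K) ⟨le_trans hA hqK.le, hKx.le⟩, hm1, hc0]; ring
    obtain ⟨n', rfl⟩ : ∃ n', n = n' + 1 :=
      ⟨n - 1, (Nat.succ_pred_eq_of_pos hn).symm⟩
    rw [Function.iterate_succ_apply, S.hTq K hK1,
      Function.iterate_fixed S.hT0 n'] at h1
    exact absurd h1.symm hqK.ne'
end

section
/- Under the saw map setup, the fixed point e_k belongs to Σ for every k ≥ k*. -/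
/-- Under the saw map setup, the fixed point `e k` belongs to `Σ` for every `k ≥ kstar`. -/
theorem e_mem_Sig (S : SawMapSetup) :
    ∀ k, S.kstar ≤ k → S.e k ∈ S.Sig := by
  intro k hk
  have hk1 : 1 ≤ k := le_trans S.hkstar hk
  have hq1 : 1 ≤ k + 1 := by omega
  have hqpos : 0 < S.q (k+1) := S.hq_pos (k+1) hq1
  have hqr : S.q (k+1) < S.r k := S.hqr k hk1
  have hsub : 0 < S.r k - S.q (k+1) := sub_pos.mpr hqr
  set q : ℝ := S.q (k+1) with hqdef
  set rk : ℝ := S.r k with hrdef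
  set ek : ℝ := S.e k with hedef
  set α : ℝ := S.p k / (rk - q) with hαdef
  have hα : 1 < α := S.halpha1 k hk1
  have hαpos : 0 < α := lt_trans one_pos hα
  have hαne : α ≠ 0 := ne_of_gt hαpos
  obtain ⟨m, c, hmc⟩ := S.haff1 k hk1
  have hTq0 : S.T q = 0 := S.hTq (k+1) hq1
  have hTr : S.T rk = S.p k := S.hTr k
  have h1 : m * q + c = 0 := by rw [← hmc q ⟨le_refl _, hqr.le⟩]; exact hTq0
  have h2 : m * rk + c = S.p k := by rw [← hmc rk ⟨hqr.le, le_refl _⟩]; exact hTr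
  have hm : m = α := by
    rw [hαdef]
    field_simp
    linarith
  have hc : c = -(α * q) := by rw [hm] at h1; linarith
  have hformula : ∀ x ∈ Set.Icc q rk, S.T x = α * (x - q) := by
    intro x hx
    rw [hmc x hx, hm, hc]; ring
  have hemem := S.he_mem k hk1
  have hefix : α * (ek - q) = ek := by
    rw [← hformula ek ⟨hemem.1.le, hemem.2.le⟩]; exact S.he_fix k hk1
  have hekq : ek - q = ek / α := by field_simp; linarith
  -- the sequence of preimages
  let x : ℕ → ℝ := fun n => Nat.rec q (fun _ y => q + y / α) n
  have hx0 : x 0 = q := rfl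
  have hxs : ∀ n, x (n+1) = q + x n / α := fun n => rfl
  have hbounds : ∀ n, q ≤ x n ∧ x n ≤ ek := by
    intro n
    induction n with
    | zero => exact ⟨le_refl q, hemem.1.le⟩
    | succ n ih =>
      constructor
      · rw [hxs]
        have : 0 < x n / α := div_pos (lt_of_lt_of_le hqpos ih.1) hαpos
        linarith
      · rw [hxs]
        have h3 : x n / α ≤ ek / α := by
          apply div_le_div_of_nonneg_right ih.2 hαpos.le
        linarith [hekq]
  have hdist : ∀ n, ek - x n = (ek - q) / α^n := by
    intro n
    induction n with
    | zero => simp [hx0]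
    | succ n ih =>
      rw [hxs]
      have : ek - (q + x n / α) = (ek - x n) / α := by
        field_simp
        linarith [hefix]
      rw [this, ih, pow_succ]
      field_simp
  have hT : ∀ n, S.T (x (n+1)) = x n := by
    intro n
    have hmem : x (n+1) ∈ Set.Icc q rk :=
      ⟨(hbounds (n+1)).1, le_trans (hbounds (n+1)).2 hemem.2.le⟩
    rw [hformula (x (n+1)) hmem, hxs]
    field_simp
    ring
  have hiter : ∀ n, S.T^[n] (x n) = q := by
    intro n
    induction n with
    | zero => simp [hx0]
    | succ n ih => rw [Function.iterate_succ_apply, hT n, ih]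
  have hpanti : S.p k ≤ S.p S.kstar := by
    have : StrictAnti S.p := strictAnti_nat_of_succ_lt S.hp_dec
    exact this.antitone hk
  have hΩ : ∀ n, x n ∈ S.Omega := by
    intro n
    refine ⟨⟨le_of_lt (lt_of_lt_of_le hqpos (hbounds n).1), ?_⟩, n+1, by omega, ?_⟩
    · have h4 : ek < rk := hemem.2
      have h5 : rk < S.p k := S.hpr k hk1
      linarith [(hbounds n).2]
    · rw [Function.iterate_succ_apply', hiter n, hTq0]
  have htend : Filter.Tendsto x Filter.atTop (nhds ek) := by
    have hxn : ∀ n, x n = ek - (ek - q) * (α⁻¹)^n := by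
      intro n
      have := hdist n
      rw [inv_pow, ← div_eq_mul_inv]
      linarith
    have h0 : Filter.Tendsto (fun n : ℕ => (ek - q) * (α⁻¹)^n) Filter.atTop (nhds 0) := by
      have hlt : α⁻¹ < 1 := by
        rw [inv_lt_one_iff₀]; right; exact hα
      have hnn : (0:ℝ) ≤ α⁻¹ := inv_nonneg.mpr hαpos.le
      have := tendsto_pow_atTop_nhds_zero_of_lt_one hnn hlt
      simpa using this.const_mul (ek - q)
    have : Filter.Tendsto (fun n : ℕ => ek - (ek - q) * (α⁻¹)^n)
        Filter.atTop (nhds (ek - 0)) := Filter.Tendsto.const_sub ek h0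
    simp only [sub_zero] at this
    exact this.congr (fun n => (hxn n).symm)
  exact mem_closure_of_tendsto htend (Filter.Eventually.of_forall hΩ)
end

section
/- Under the saw map setup, assume 1/α_{k*} + 1/β_{k*} > 1. If x ∈ J* satisfies x ∉ Σ and T(x) ∈ Σ, then x is a local maximum point of T (i.e., there exists δ > 0 such that T(y) ≤ T(x) for all y ∈ J with |y − x| < δ) and there exists n ∈ ℕ such that Tⁿ(x) = e_{k*}. -/
namespace SawMapSetup

variable (S : SawMapSetup)

/-! ### Basic order facts -/

lemma rq_pos {k : ℕ} (hk : 1 ≤ k) : 0 < S.r k - S.q (k + 1) :=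
  sub_pos.2 (S.hqr k hk)

lemma qr_pos {k : ℕ} (hk : 1 ≤ k) : 0 < S.q k - S.r k :=
  sub_pos.2 (S.hrq k hk)

lemma alpha_pos {k : ℕ} (hk : 1 ≤ k) : 0 < S.alpha k :=
  div_pos (S.hp_pos k) (S.rq_pos hk)

lemma beta_pos {k : ℕ} (hk : 1 ≤ k) : 0 < S.beta k :=
  div_pos (S.hp_pos k) (S.qr_pos hk)

lemma one_lt_alpha {k : ℕ} (hk : 1 ≤ k) : 1 < S.alpha k :=
  S.halpha1 k hk

lemma alpha_mul (k : ℕ) (hk : 1 ≤ k) : S.alpha k * (S.r k - S.q (k + 1)) = S.p k := by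
  have h := S.rq_pos hk
  rw [alpha]
  exact div_mul_cancel₀ _ (ne_of_gt h)

lemma beta_mul (k : ℕ) (hk : 1 ≤ k) : S.beta k * (S.q k - S.r k) = S.p k := by
  have h := S.qr_pos hk
  rw [beta]
  exact div_mul_cancel₀ _ (ne_of_gt h)

lemma q_succ_lt_q {k : ℕ} (hk : 1 ≤ k) : S.q (k + 1) < S.q k :=
  (S.hqr k hk).trans (S.hrq k hk)

lemma q_anti {k j : ℕ} (hk : 1 ≤ k) (hkj : k ≤ j) : S.q j ≤ S.q k := by
  induction j with
  | zero => exact absurd hkj (by omega)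
  | succ n ih =>
    rcases Nat.lt_or_ge k (n+1) with h | h
    · have hn : k ≤ n := by omega
      exact le_trans (le_of_lt (S.q_succ_lt_q (le_trans hk hn))) (ih hn)
    · have : k = n + 1 := le_antisymm hkj h
      simp [this]

lemma p_anti {k j : ℕ} (hkj : k ≤ j) : S.p j ≤ S.p k := by
  induction j with
  | zero => have : k = 0 := by omega
            simp [this]
  | succ n ih =>
    rcases Nat.lt_or_ge k (n+1) with h | h
    · exact le_trans (le_of_lt (S.hp_dec n)) (ih (by omega))
    · have : k = n + 1 := le_antisymm hkj h
      simp [this]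

lemma alpha_mono {k j : ℕ} (hkj : k ≤ j) : S.alpha k ≤ S.alpha j := by
  induction j with
  | zero => have : k = 0 := by omega
            simp [this]
  | succ n ih =>
    rcases Nat.lt_or_ge k (n+1) with h | h
    · exact le_trans (ih (by omega)) (le_of_lt (S.halpha_mono n))
    · have : k = n + 1 := le_antisymm hkj h
      simp [this]

lemma beta_mono {k j : ℕ} (hk : 1 ≤ k) (hkj : k ≤ j) : S.beta k ≤ S.beta j := by
  induction j with
  | zero => exact absurd hkj (by omega)
  | succ n ih =>
    rcases Nat.lt_or_ge k (n+1) with h | h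
    · have hn : k ≤ n := by omega
      exact le_trans (ih hn) (le_of_lt (S.hbeta_mono n (le_trans hk hn)))
    · have : k = n + 1 := le_antisymm hkj h
      simp [this]

/-! ### Affine formulas for `T` on the two branches of tooth `k` -/

lemma T_left {k : ℕ} (hk : 1 ≤ k) {w : ℝ} (hw : w ∈ Set.Icc (S.q (k + 1)) (S.r k)) :
    S.T w = S.alpha k * (w - S.q (k + 1)) := by
  obtain ⟨m, c, h⟩ := S.haff1 k hk
  have hq : S.q (k+1) ≤ S.r k := le_of_lt (S.hqr k hk)
  have h1 := h (S.q (k+1)) ⟨le_refl _, hq⟩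
  have h2 := h (S.r k) ⟨hq, le_refl _⟩
  rw [S.hTq (k+1) (by omega)] at h1
  rw [S.hTr k] at h2
  have hw' := h w hw
  have hrq := S.rq_pos hk
  have hm : m = S.alpha k := by
    rw [alpha, eq_div_iff (ne_of_gt hrq)]
    linarith
  subst hm
  rw [hw']
  linear_combination -h1

lemma T_right {k : ℕ} (hk : 1 ≤ k) {w : ℝ} (hw : w ∈ Set.Icc (S.r k) (S.q k)) :
    S.T w = S.beta k * (S.q k - w) := by
  obtain ⟨m, c, h⟩ := S.haff2 k hk
  have hq : S.r k ≤ S.q k := le_of_lt (S.hrq k hk)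
  have h1 := h (S.r k) ⟨le_refl _, hq⟩
  have h2 := h (S.q k) ⟨hq, le_refl _⟩
  rw [S.hTq k hk] at h2
  rw [S.hTr k] at h1
  have hw' := h w hw
  have hqr := S.qr_pos hk
  have hm : m = -S.beta k := by
    rw [beta]
    field_simp
    linarith
  subst hm
  rw [hw']
  linear_combination -h2

/-- On tooth `k`, `0 ≤ T w ≤ p k`. -/
lemma T_tooth_bounds {k : ℕ} (hk : 1 ≤ k) {w : ℝ}
    (hw : w ∈ Set.Icc (S.q (k + 1)) (S.q k)) :
    0 ≤ S.T w ∧ S.T w ≤ S.p k := by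
  rcases le_or_gt w (S.r k) with h | h
  · rw [S.T_left hk ⟨hw.1, h⟩]
    have ha := S.alpha_pos hk
    constructor
    · nlinarith [hw.1]
    · nlinarith [S.alpha_mul k hk]
  · rw [S.T_right hk ⟨le_of_lt h, hw.2⟩]
    have hb := S.beta_pos hk
    constructor
    · nlinarith [hw.2]
    · nlinarith [S.beta_mul k hk]

/-! ### Fixed point identities -/

lemma e_mem {k : ℕ} (hk : 1 ≤ k) : S.q (k+1) < S.e k ∧ S.e k < S.r k :=
  ⟨(S.he_mem k hk).1, (S.he_mem k hk).2⟩

lemma e_fix_eq {k : ℕ} (hk : 1 ≤ k) : S.alpha k * (S.e k - S.q (k + 1)) = S.e k := by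
  have h := S.he_fix k hk
  have hm := S.he_mem k hk
  rw [← S.T_left hk ⟨le_of_lt hm.1, le_of_lt hm.2⟩]
  exact h

/-- `q (k+1) = e k - e k / alpha k`. -/
lemma q_succ_eq {k : ℕ} (hk : 1 ≤ k) : S.q (k + 1) = S.e k - S.e k / S.alpha k := by
  have h := S.e_fix_eq hk
  have ha := S.alpha_pos hk
  field_simp
  nlinarith

lemma e_pos {k : ℕ} (hk : 1 ≤ k) : 0 < S.e k :=
  lt_trans (S.hq_pos (k+1) (by omega)) (S.e_mem hk).1

/-- `p k - e k = alpha k * (r k - e k)`. -/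
lemma p_sub_e {k : ℕ} (hk : 1 ≤ k) : S.p k - S.e k = S.alpha k * (S.r k - S.e k) := by
  have h1 := S.alpha_mul k hk
  have h2 := S.e_fix_eq hk
  nlinarith

end SawMapSetup

namespace SawMapSetup

variable (S : SawMapSetup)

/-! ### Consequences of the slope hypothesis -/

lemma slope_sum (hsl : 1 < 1 / S.alpha S.kstar + 1 / S.beta S.kstar) : S.p S.kstar < S.q S.kstar - S.q (S.kstar + 1) := by
  have hk := S.hkstar
  have h1 : 1 / S.alpha S.kstar = (S.r S.kstar - S.q (S.kstar + 1)) / S.p S.kstar := by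
    rw [alpha, one_div_div]
  have h2 : 1 / S.beta S.kstar = (S.q S.kstar - S.r S.kstar) / S.p S.kstar := by
    rw [beta, one_div_div]
  rw [h1, h2, ← add_div, lt_div_iff₀ (S.hp_pos S.kstar), one_mul] at hsl
  linarith

lemma p_lt_q_star (hsl : 1 < 1 / S.alpha S.kstar + 1 / S.beta S.kstar) : S.p S.kstar < S.q S.kstar := by
  have := S.slope_sum hsl
  have := S.hq_pos (S.kstar + 1) (by omega)
  linarith

lemma Tp_eq (hsl : 1 < 1 / S.alpha S.kstar + 1 / S.beta S.kstar) : S.T (S.p S.kstar) = S.beta S.kstar * (S.q S.kstar - S.p S.kstar) := by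
  have hk := S.hkstar
  exact S.T_right hk ⟨le_of_lt (S.hpr S.kstar hk), le_of_lt (S.p_lt_q_star hsl)⟩

lemma e_lt_r_star : S.e S.kstar < S.r S.kstar := (S.he_mem S.kstar S.hkstar).2

lemma e_lt_p_star : S.e S.kstar < S.p S.kstar :=
  lt_trans S.e_lt_r_star (S.hpr S.kstar S.hkstar)

lemma Tp_gt_e (hsl : 1 < 1 / S.alpha S.kstar + 1 / S.beta S.kstar) : S.e S.kstar < S.T (S.p S.kstar) := by
  have hk := S.hkstar
  have hpe0 := S.e_lt_p_star
  set α := S.alpha S.kstar with hα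
  set β := S.beta S.kstar with hβ
  set p := S.p S.kstar
  set q := S.q S.kstar
  set r := S.r S.kstar
  set q' := S.q (S.kstar + 1)
  set e := S.e S.kstar
  have hαpos : 0 < α := S.alpha_pos hk
  have hα1 : 1 < α := S.one_lt_alpha hk
  have hβpos : 0 < β := S.beta_pos hk
  have h1 : p - e = α * (r - e) := S.p_sub_e hk
  have h2 : β * (q - r) = p := S.beta_mul S.kstar hk
  have h3 : α * (r - q') = p := S.alpha_mul S.kstar hk
  have h4 : p < q - q' := S.slope_sum hsl
  have hpe : 0 < p - e := by linarith
  have hqr : 0 < q - r := S.qr_pos hk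
  have hppos : 0 < p := S.hp_pos S.kstar
  have hA : (α - 1) * p < α * (q - r) := by nlinarith
  have hB : α * (p - r) = (α - 1) * (p - e) := by nlinarith
  have h5 : (α - 1) * p * (p - e) < α * (q - r) * (p - e) :=
    mul_lt_mul_of_pos_right hA hpe
  have h6 : α * (p - r) * p = (α - 1) * (p - e) * p := by rw [hB]
  have key : p * (p - r) < (p - e) * (q - r) := by nlinarith
  have h7 : β * (p - r) * (q - r) = p * (p - r) := by linear_combination (p - r) * h2
  have h8 : β * (p - r) < p - e := by nlinarith
  have hfin : S.T p = β * (q - p) := S.Tp_eq hsl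
  rw [hfin]
  nlinarith

/-- The trap `(e kstar, p kstar]` is forward invariant. -/
lemma trap_inv (hsl : 1 < 1 / S.alpha S.kstar + 1 / S.beta S.kstar) {z : ℝ} (hz1 : S.e S.kstar < z) (hz2 : z ≤ S.p S.kstar) :
    S.e S.kstar < S.T z ∧ S.T z ≤ S.p S.kstar := by
  have hk := S.hkstar
  have he := S.he_mem S.kstar hk
  rcases le_or_gt z (S.r S.kstar) with h | h
  · rw [S.T_left hk ⟨le_of_lt (lt_trans he.1 hz1), h⟩]
    have hαpos : 0 < S.alpha S.kstar := S.alpha_pos hk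
    have hfix := S.e_fix_eq hk
    have hmul := S.alpha_mul S.kstar hk
    constructor
    · nlinarith
    · nlinarith
  · rw [S.T_right hk ⟨le_of_lt h, le_trans hz2 (le_of_lt (S.p_lt_q_star hsl))⟩]
    have hβpos : 0 < S.beta S.kstar := S.beta_pos hk
    have hTp := S.Tp_gt_e hsl
    rw [S.Tp_eq hsl] at hTp
    have hmul := S.beta_mul S.kstar hk
    constructor
    · nlinarith
    · nlinarith

lemma trap_iter (hsl : 1 < 1 / S.alpha S.kstar + 1 / S.beta S.kstar) {z : ℝ} (hz1 : S.e S.kstar < z) (hz2 : z ≤ S.p S.kstar) (n : ℕ) :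
    S.e S.kstar < S.T^[n] z ∧ S.T^[n] z ≤ S.p S.kstar := by
  induction n with
  | zero => exact ⟨hz1, hz2⟩
  | succ m ih =>
    rw [Function.iterate_succ_apply']
    exact S.trap_inv hsl ih.1 ih.2

lemma Omega_sub_e (hsl : 1 < 1 / S.alpha S.kstar + 1 / S.beta S.kstar) : ∀ ω ∈ S.Omega, 0 ≤ ω ∧ ω ≤ S.e S.kstar := by
  rintro ω ⟨⟨h0, hp⟩, n, hn1, hn0⟩
  refine ⟨h0, ?_⟩
  by_contra hc
  push_neg at hc
  have := (S.trap_iter hsl hc hp n).1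
  rw [hn0] at this
  exact absurd this (not_lt.2 (le_of_lt (S.e_pos S.hkstar)))

lemma Sig_sub_e (hsl : 1 < 1 / S.alpha S.kstar + 1 / S.beta S.kstar) : S.Sig ⊆ Set.Icc 0 (S.e S.kstar) := by
  apply closure_minimal _ isClosed_Icc
  intro ω hω
  exact (S.Omega_sub_e hsl ω hω : _)

lemma zero_mem_Omega : (0 : ℝ) ∈ S.Omega :=
  ⟨⟨le_refl _, le_of_lt (S.hp_pos S.kstar)⟩, 1, le_refl _, by simp [S.hT0]⟩

/-- Locating a point in a tooth. -/
lemma exists_tooth {z : ℝ} {k : ℕ} (hk : 1 ≤ k) (hz : 0 < z) (hzk : z ≤ S.q k) :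
    ∃ j, k ≤ j ∧ S.q (j + 1) < z ∧ z ≤ S.q j := by
  by_contra hc
  push_neg at hc
  have hall : ∀ j, k ≤ j → z ≤ S.q j := by
    intro j hj
    induction j with
    | zero => exact absurd hj (by omega)
    | succ n ih =>
      rcases Nat.lt_or_ge k (n+1) with h | h
      · have hn : k ≤ n := by omega
        have hzn := ih hn
        by_contra hq
        push_neg at hq
        exact absurd hzn (not_le.2 (hc n hn hq))
      · have hkn : k = n + 1 := by omega
        rw [← hkn]; exact hzk
  have hev : ∀ᶠ j in Filter.atTop, S.q j < z := S.hq_lim.eventually_lt_const hz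
  obtain ⟨j, hj1, hj2⟩ := (hev.and (Filter.eventually_ge_atTop k)).exists
  exact absurd (hall j hj2) (not_le.2 hj1)

/-- `J*` is forward invariant. -/
lemma T_mem_Jstar (hsl : 1 < 1 / S.alpha S.kstar + 1 / S.beta S.kstar)
    {z : ℝ} (hz : z ∈ S.Jstar) : S.T z ∈ S.Jstar := by
  rcases eq_or_lt_of_le hz.1 with h0 | h0
  · rw [← h0, S.hT0]; exact ⟨le_refl _, le_of_lt (S.hp_pos S.kstar)⟩
  obtain ⟨j, hj, hj1, hj2⟩ := S.exists_tooth S.hkstar h0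
    (le_trans hz.2 (le_of_lt (S.p_lt_q_star hsl)))
  have hb := S.T_tooth_bounds (le_trans S.hkstar hj) ⟨le_of_lt hj1, hj2⟩
  exact ⟨hb.1, le_trans hb.2 (S.p_anti hj)⟩

lemma iter_mem_Jstar (hsl : 1 < 1 / S.alpha S.kstar + 1 / S.beta S.kstar)
    {z : ℝ} (hz : z ∈ S.Jstar) (n : ℕ) : S.T^[n] z ∈ S.Jstar := by
  induction n with
  | zero => exact hz
  | succ m ih => rw [Function.iterate_succ_apply']; exact S.T_mem_Jstar hsl ih

lemma Omega_fwd (hsl : 1 < 1 / S.alpha S.kstar + 1 / S.beta S.kstar)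
    {ω : ℝ} (hω : ω ∈ S.Omega) : S.T ω ∈ S.Omega := by
  obtain ⟨hJ, n, hn1, hn0⟩ := hω
  obtain ⟨m, rfl⟩ : ∃ m, n = m + 1 := ⟨n - 1, by omega⟩
  rcases Nat.eq_zero_or_pos m with hm | hm
  · subst hm
    rw [Function.iterate_succ_apply, Function.iterate_zero_apply] at hn0
    rw [hn0]
    exact S.zero_mem_Omega
  · refine ⟨S.T_mem_Jstar hsl hJ, m, hm, ?_⟩
    rw [← Function.iterate_succ_apply S.T m ω]
    exact hn0

lemma Omega_back {z : ℝ} (hz : z ∈ S.Jstar) (hTz : S.T z ∈ S.Omega) : z ∈ S.Omega := by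
  obtain ⟨hJ, n, hn1, hn0⟩ := hTz
  exact ⟨hz, n + 1, by omega, by rw [Function.iterate_succ_apply]; exact hn0⟩

lemma Omega_back_iter (hsl : 1 < 1 / S.alpha S.kstar + 1 / S.beta S.kstar)
    {z : ℝ} (hz : z ∈ S.Jstar) (n : ℕ) (hn : S.T^[n] z ∈ S.Omega) : z ∈ S.Omega := by
  induction n generalizing z with
  | zero => exact hn
  | succ m ih =>
    rw [Function.iterate_succ_apply] at hn
    exact S.Omega_back hz (ih (S.T_mem_Jstar hsl hz) hn)

end SawMapSetup

namespace SawMapSetup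

variable (S : SawMapSetup)

lemma mem_Omega_of_iter {z : ℝ} {n : ℕ} (hz0 : 0 ≤ z) (hzp : z ≤ S.p S.kstar)
    (hn : 1 ≤ n) (h : S.T^[n] z = 0) : z ∈ S.Omega :=
  ⟨⟨hz0, hzp⟩, n, hn, h⟩

lemma e_le_e_star {j : ℕ} (hj : S.kstar ≤ j) : S.e j ≤ S.e S.kstar := by
  rcases eq_or_lt_of_le hj with h | h
  · rw [← h]
  · have hj1 : 1 ≤ j := le_trans S.hkstar hj
    have h1 : S.e j < S.r j := (S.he_mem j hj1).2
    have h2 : S.r j < S.q j := S.hrq j hj1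
    have h3 : S.q j ≤ S.q (S.kstar + 1) := S.q_anti (by omega) (by omega)
    have h4 : S.q (S.kstar + 1) < S.e S.kstar := (S.he_mem S.kstar S.hkstar).1
    linarith

lemma q_lt_p {j : ℕ} (hj : S.kstar + 1 ≤ j) : S.q j < S.p j := by
  have hk := S.hkstar
  have hj1 : 1 ≤ j - 1 := by omega
  have hm := (S.he_mem (j-1) hj1).1
  have hj2 : j - 1 + 1 = j := by omega
  rw [hj2] at hm
  exact lt_trans hm (S.hp_e_big j hj)

lemma one_le_alpha_pow {j i : ℕ} (hj : 1 ≤ j) : (1 : ℝ) ≤ S.alpha j ^ i := by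
  calc (1:ℝ) = 1 ^ i := (one_pow i).symm
  _ ≤ S.alpha j ^ i := pow_le_pow_left₀ zero_le_one (le_of_lt (S.one_lt_alpha hj)) i

/-- `Ω` accumulates at `e j` from the left, for every `j ≥ kstar`. -/
lemma omega_left_approx {j : ℕ} (hj : S.kstar ≤ j) {ε : ℝ} (hε : 0 < ε) :
    ∃ ω ∈ S.Omega, S.e j - ε < ω ∧ ω < S.e j := by
  have hj1 : 1 ≤ j := le_trans S.hkstar hj
  have hα1 := S.one_lt_alpha hj1
  have hα0 : (0:ℝ) < S.alpha j := S.alpha_pos hj1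
  have hd : 0 < S.e j - S.q (j+1) := sub_pos.2 (S.he_mem j hj1).1
  set z : ℕ → ℝ := fun i => S.e j - (S.e j - S.q (j+1)) / S.alpha j ^ i with hz
  have hpow : ∀ i, (0:ℝ) < S.alpha j ^ i := fun i => pow_pos hα0 i
  have hlt : ∀ i, z i < S.e j := by
    intro i
    simp only [hz]
    have := div_pos hd (hpow i)
    linarith
  have hge : ∀ i, S.q (j+1) ≤ z i := by
    intro i
    simp only [hz]
    have h1 : (S.e j - S.q (j+1)) / S.alpha j ^ i ≤ S.e j - S.q (j+1) :=
      div_le_self (le_of_lt hd) (S.one_le_alpha_pow hj1)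
    linarith
  have hmem : ∀ i, z i ∈ Set.Icc (S.q (j+1)) (S.r j) := fun i =>
    ⟨hge i, le_of_lt (lt_trans (hlt i) (S.he_mem j hj1).2)⟩
  have hTz : ∀ i, S.T (z (i+1)) = z i := by
    intro i
    rw [S.T_left hj1 (hmem (i+1)), S.q_succ_eq hj1]
    simp only [hz]
    have h0 : S.alpha j ^ i ≠ 0 := ne_of_gt (hpow i)
    have h1 : S.alpha j ≠ 0 := ne_of_gt hα0
    field_simp
    ring
  have hiter : ∀ i, S.T^[i] (z i) = S.q (j+1) := by
    intro i
    induction i with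
    | zero => simp only [hz, Function.iterate_zero_apply, pow_zero, div_one]; ring
    | succ m ih =>
      rw [Function.iterate_succ_apply, hTz m, ih]
  have hΩ : ∀ i, z i ∈ S.Omega := by
    intro i
    refine S.mem_Omega_of_iter ?_ ?_ (n := i + 1) (by omega) ?_
    · exact le_trans (le_of_lt (S.hq_pos (j+1) (by omega))) (hge i)
    · have h1 : z i < S.e j := hlt i
      have h2 := S.e_le_e_star hj
      have h3 := S.e_lt_p_star
      linarith
    · rw [Function.iterate_succ_apply', hiter i, S.hTq (j+1) (by omega)]
  obtain ⟨i, hi⟩ := pow_unbounded_of_one_lt ((S.e j - S.q (j+1)) / ε) hα1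
  refine ⟨z i, hΩ i, ?_, hlt i⟩
  simp only [hz]
  have : (S.e j - S.q (j+1)) / S.alpha j ^ i < ε := by
    rw [div_lt_iff₀ (hpow i)]
    rw [div_lt_iff₀ hε] at hi
    linarith
  linarith

/-- `Ω` accumulates at `e j` from the right, for every `j ≥ kstar + 1`. -/
lemma omega_right_approx {j : ℕ} (hj : S.kstar + 1 ≤ j) {ε : ℝ} (hε : 0 < ε) :
    ∃ ω ∈ S.Omega, S.e j < ω ∧ ω < S.e j + ε := by
  have hj1 : 1 ≤ j := by omega
  have hα1 := S.one_lt_alpha hj1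
  have hα0 : (0:ℝ) < S.alpha j := S.alpha_pos hj1
  have hd : 0 < S.q j - S.e j :=
    sub_pos.2 (lt_trans (S.he_mem j hj1).2 (S.hrq j hj1))
  have hqp := S.q_lt_p hj
  have hre : S.q j - S.e j < S.alpha j * (S.r j - S.e j) := by
    have := S.p_sub_e hj1
    linarith
  set u : ℕ → ℝ := fun i => S.e j + (S.q j - S.e j) / S.alpha j ^ (i+1) with hu
  have hpow : ∀ i : ℕ, (0:ℝ) < S.alpha j ^ i := fun i => pow_pos hα0 i
  have hgt : ∀ i, S.e j < u i := by
    intro i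
    simp only [hu]
    have := div_pos hd (hpow (i+1))
    linarith
  have hle : ∀ i, u i < S.r j := by
    intro i
    simp only [hu]
    have h1 : (S.q j - S.e j) / S.alpha j ^ (i+1) ≤ (S.q j - S.e j) / S.alpha j ^ 1 := by
      apply div_le_div_of_nonneg_left (le_of_lt hd) (hpow 1)
      exact pow_le_pow_right₀ (le_of_lt hα1) (by omega)
    have h2 : (S.q j - S.e j) / S.alpha j ^ 1 < S.r j - S.e j := by
      rw [pow_one, div_lt_iff₀ hα0]
      nlinarith
    linarith
  have hmem : ∀ i, u i ∈ Set.Icc (S.q (j+1)) (S.r j) := by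
    intro i
    refine ⟨?_, le_of_lt (hle i)⟩
    exact le_trans (le_of_lt (S.he_mem j hj1).1) (le_of_lt (hgt i))
  have hTu : ∀ i, S.T (u (i+1)) = u i := by
    intro i
    rw [S.T_left hj1 (hmem (i+1)), S.q_succ_eq hj1]
    simp only [hu]
    have h0 : ∀ i : ℕ, S.alpha j ^ i ≠ 0 := fun i => ne_of_gt (hpow i)
    have h1 : S.alpha j ≠ 0 := ne_of_gt hα0
    field_simp
    ring
  have hTu0 : S.T (u 0) = S.q j := by
    rw [S.T_left hj1 (hmem 0), S.q_succ_eq hj1]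
    simp only [hu]
    have h1 : S.alpha j ≠ 0 := ne_of_gt hα0
    field_simp
    ring
  have hiter : ∀ i, S.T^[i] (u i) = u 0 := by
    intro i
    induction i with
    | zero => simp
    | succ m ih => rw [Function.iterate_succ_apply, hTu m, ih]
  have hΩ : ∀ i, u i ∈ S.Omega := by
    intro i
    refine S.mem_Omega_of_iter ?_ ?_ (n := i + 2) (by omega) ?_
    · exact le_trans (le_of_lt (S.e_pos hj1)) (le_of_lt (hgt i))
    · have h1 : u i < S.r j := hle i
      have h2 : S.r j < S.q j := S.hrq j hj1
      have h3 : S.q j ≤ S.q (S.kstar + 1) := S.q_anti (by omega) hj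
      have h4 : S.q (S.kstar + 1) < S.e S.kstar := (S.he_mem S.kstar S.hkstar).1
      have h5 := S.e_lt_p_star
      linarith
    · have : i + 2 = (i + 1) + 1 := rfl
      rw [this, Function.iterate_succ_apply', Function.iterate_succ_apply', hiter i,
        hTu0, S.hTq j hj1]
  obtain ⟨i, hi⟩ := pow_unbounded_of_one_lt ((S.q j - S.e j) / ε) hα1
  refine ⟨u i, hΩ i, hgt i, ?_⟩
  simp only [hu]
  have hig : (S.q j - S.e j) / S.alpha j ^ (i+1) < ε := by
    rw [div_lt_iff₀ (hpow (i+1))]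
    rw [div_lt_iff₀ hε] at hi
    have : S.alpha j ^ i ≤ S.alpha j ^ (i+1) :=
      pow_le_pow_right₀ (le_of_lt hα1) (by omega)
    nlinarith [hε]
  linarith

/-- `T` is Lipschitz on tooth `j`. -/
lemma tooth_lip {j : ℕ} (hj : 1 ≤ j) {w σ : ℝ}
    (hw : w ∈ Set.Icc (S.q (j+1)) (S.q j)) (hσ : σ ∈ Set.Icc (S.q (j+1)) (S.q j)) :
    |S.T w - S.T σ| ≤ max (S.alpha j) (S.beta j) * |w - σ| := by
  have hα0 : (0:ℝ) < S.alpha j := S.alpha_pos hj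
  have hβ0 : (0:ℝ) < S.beta j := S.beta_pos hj
  have hLα : S.alpha j ≤ max (S.alpha j) (S.beta j) := le_max_left _ _
  have hLβ : S.beta j ≤ max (S.alpha j) (S.beta j) := le_max_right _ _
  have key : ∀ a b : ℝ, a ∈ Set.Icc (S.q (j+1)) (S.q j) → b ∈ Set.Icc (S.q (j+1)) (S.q j) →
      a ≤ b → |S.T a - S.T b| ≤ max (S.alpha j) (S.beta j) * |a - b| := by
    intro a b ha hb hab
    rcases le_or_gt b (S.r j) with h1 | h1
    · have hTa := S.T_left hj ⟨ha.1, le_trans hab h1⟩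
      have hTb := S.T_left hj ⟨hb.1, h1⟩
      have : S.T a - S.T b = S.alpha j * (a - b) := by rw [hTa, hTb]; ring
      rw [this, abs_mul, abs_of_pos hα0]
      exact mul_le_mul_of_nonneg_right hLα (abs_nonneg _)
    · rcases le_or_gt a (S.r j) with h2 | h2
      · have hTa := S.T_left hj ⟨ha.1, h2⟩
        have hTb := S.T_right hj ⟨le_of_lt h1, hb.2⟩
        have hab' : a ≤ S.r j ∧ S.r j ≤ b := ⟨h2, le_of_lt h1⟩
        have e1 : |S.T a - S.T b| ≤ |S.T a - S.p j| + |S.p j - S.T b| := by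
          have := abs_sub_le (S.T a) (S.p j) (S.T b)
          linarith
        have e2 : |S.T a - S.p j| = S.alpha j * (S.r j - a) := by
          rw [hTa, ← S.alpha_mul j hj, abs_of_nonpos (by nlinarith), ]
          ring
        have e3 : |S.p j - S.T b| = S.beta j * (b - S.r j) := by
          rw [hTb, ← S.beta_mul j hj, abs_of_nonneg (by nlinarith)]
          ring
        have e4 : |a - b| = (S.r j - a) + (b - S.r j) := by
          rw [abs_of_nonpos (by linarith)]
          ring
        rw [e2, e3] at e1
        rw [e4]
        have b1 : S.alpha j * (S.r j - a) ≤ max (S.alpha j) (S.beta j) * (S.r j - a) :=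
          mul_le_mul_of_nonneg_right hLα (by linarith)
        have b2 : S.beta j * (b - S.r j) ≤ max (S.alpha j) (S.beta j) * (b - S.r j) :=
          mul_le_mul_of_nonneg_right hLβ (by linarith)
        calc |S.T a - S.T b| ≤ S.alpha j * (S.r j - a) + S.beta j * (b - S.r j) := e1
        _ ≤ max (S.alpha j) (S.beta j) * ((S.r j - a) + (b - S.r j)) := by linarith
      · have hTa := S.T_right hj ⟨le_of_lt h2, ha.2⟩
        have hTb := S.T_right hj ⟨le_of_lt h1, hb.2⟩
        have : S.T a - S.T b = S.beta j * (b - a) := by rw [hTa, hTb]; ring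
        rw [this, abs_mul, abs_of_pos hβ0, abs_sub_comm]
        exact mul_le_mul_of_nonneg_right hLβ (abs_nonneg _)
  rcases le_total w σ with h | h
  · exact key w σ hw hσ h
  · rw [abs_sub_comm (S.T w), abs_sub_comm w]
    exact key σ w hσ hw h

end SawMapSetup

namespace SawMapSetup

variable (S : SawMapSetup)

lemma Sig_fwd (hsl : 1 < 1 / S.alpha S.kstar + 1 / S.beta S.kstar)
    {σ : ℝ} (hσ : σ ∈ S.Sig) : S.T σ ∈ S.Sig := by
  have hσe := S.Sig_sub_e hsl hσ
  rcases eq_or_lt_of_le hσe.1 with h0 | h0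
  · rw [← h0, S.hT0]
    exact subset_closure S.zero_mem_Omega
  have hσq : σ ≤ S.q S.kstar := by
    have h1 := S.e_lt_r_star
    have h2 := S.hrq S.kstar S.hkstar
    linarith [hσe.2]
  obtain ⟨j, hj, hj1, hj2⟩ := S.exists_tooth S.hkstar h0 hσq
  have hj1' : 1 ≤ j := le_trans S.hkstar hj
  rcases eq_or_lt_of_le hj2 with hq | hq
  · rw [hq, S.hTq j hj1']
    exact subset_closure S.zero_mem_Omega
  set L := max (S.alpha j) (S.beta j) with hL
  have hL0 : 0 < L := lt_of_lt_of_le (S.alpha_pos hj1') (le_max_left _ _)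
  have hη : 0 < min (σ - S.q (j+1)) (S.q j - σ) := lt_min (by linarith) (by linarith)
  rw [Sig, Metric.mem_closure_iff]
  intro ε hε
  have hε' : 0 < min (min (σ - S.q (j+1)) (S.q j - σ)) (ε / (L+1)) :=
    lt_min hη (div_pos hε (by linarith))
  obtain ⟨ω, hω, hd⟩ := Metric.mem_closure_iff.1 hσ _ hε'
  rw [Real.dist_eq] at hd
  have hd1 : |σ - ω| < min (σ - S.q (j+1)) (S.q j - σ) := lt_of_lt_of_le hd (min_le_left _ _)
  have hd2 : |σ - ω| < ε / (L+1) := lt_of_lt_of_le hd (min_le_right _ _)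
  have hωt : ω ∈ Set.Icc (S.q (j+1)) (S.q j) := by
    have h1 := abs_lt.1 hd1
    constructor
    · have := min_le_left (σ - S.q (j+1)) (S.q j - σ)
      linarith [h1.2]
    · have := min_le_right (σ - S.q (j+1)) (S.q j - σ)
      linarith [h1.1]
  refine ⟨S.T ω, S.Omega_fwd hsl hω, ?_⟩
  rw [Real.dist_eq]
  have hlip := S.tooth_lip hj1' ⟨le_of_lt hj1, hj2⟩ hωt
  have : L * |σ - ω| < L * (ε / (L+1)) := by
    apply mul_lt_mul_of_pos_left hd2 hL0
  have hfin : L * (ε / (L+1)) < ε := by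
    rw [mul_div_assoc']
    rw [div_lt_iff₀ (by linarith : (0:ℝ) < L + 1)]
    nlinarith
  calc |S.T σ - S.T ω| ≤ L * |σ - ω| := hlip
  _ < ε := by linarith

lemma Sig_iter_fwd (hsl : 1 < 1 / S.alpha S.kstar + 1 / S.beta S.kstar)
    {σ : ℝ} (hσ : σ ∈ S.Sig) (n : ℕ) : S.T^[n] σ ∈ S.Sig := by
  induction n with
  | zero => exact hσ
  | succ m ih => rw [Function.iterate_succ_apply']; exact S.Sig_fwd hsl ih

lemma pullback_left (hsl : 1 < 1 / S.alpha S.kstar + 1 / S.beta S.kstar)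
    {j : ℕ} {z : ℝ} (hj : S.kstar ≤ j) (hz : z ∈ Set.Ico (S.q (j+1)) (S.r j))
    (hTz : S.T z ∈ S.Sig) : z ∈ S.Sig := by
  have hj1 : 1 ≤ j := le_trans S.hkstar hj
  have hα0 : (0:ℝ) < S.alpha j := S.alpha_pos hj1
  have hrp : S.r j ≤ S.p S.kstar := by
    rcases eq_or_lt_of_le hj with h | h
    · rw [← h]; exact le_of_lt (S.hpr S.kstar S.hkstar)
    · have h1 : S.r j < S.q j := S.hrq j hj1
      have h2 : S.q j ≤ S.q (S.kstar + 1) := S.q_anti (by omega) h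
      have h3 : S.q (S.kstar + 1) < S.e S.kstar := (S.he_mem S.kstar S.hkstar).1
      have h4 := S.e_lt_p_star
      linarith
  have hTz' : S.T z = S.alpha j * (z - S.q (j+1)) := S.T_left hj1 ⟨hz.1, le_of_lt hz.2⟩
  have hTzlt : S.T z < S.p j := by
    rw [hTz']
    nlinarith [S.alpha_mul j hj1, hz.2]
  rw [Sig, Metric.mem_closure_iff]
  intro ε hε
  have hε' : 0 < min (S.alpha j * ε) (S.p j - S.T z) :=
    lt_min (mul_pos hα0 hε) (by linarith)
  obtain ⟨ω, hω, hd⟩ := Metric.mem_closure_iff.1 hTz _ hε'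
  rw [Real.dist_eq] at hd
  have hω0 : 0 ≤ ω := hω.1.1
  have hωp : ω ≤ S.p j := by
    have h1 := (abs_lt.1 hd).1
    have h2 := min_le_right (S.alpha j * ε) (S.p j - S.T z)
    linarith
  set v := S.q (j+1) + ω / S.alpha j with hv
  have hvm : v ∈ Set.Icc (S.q (j+1)) (S.r j) := by
    constructor
    · have := div_nonneg hω0 (le_of_lt hα0)
      simp only [hv]
      linarith
    · simp only [hv]
      have h1 : ω / S.alpha j ≤ S.p j / S.alpha j := by gcongr
      have h2 : S.p j / S.alpha j = S.r j - S.q (j+1) := by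
        rw [alpha]
        field_simp
        exact mul_div_cancel_left₀ _ (ne_of_gt (S.hp_pos j))
      linarith
  have hTv : S.T v = ω := by
    rw [S.T_left hj1 hvm]
    simp only [hv]
    field_simp
    ring
  have hvΩ : v ∈ S.Omega := by
    apply S.Omega_back ⟨?_, ?_⟩ (by rw [hTv]; exact hω)
    · exact le_trans (le_of_lt (S.hq_pos (j+1) (by omega))) hvm.1
    · exact le_trans hvm.2 hrp
  refine ⟨v, hvΩ, ?_⟩
  rw [Real.dist_eq]
  have hzv : z - v = (S.T z - ω) / S.alpha j := by
    simp only [hv]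
    rw [hTz']
    field_simp
    ring
  rw [hzv, abs_div, abs_of_pos hα0, div_lt_iff₀ hα0]
  have h2 := min_le_left (S.alpha j * ε) (S.p j - S.T z)
  calc |S.T z - ω| < min (S.alpha j * ε) (S.p j - S.T z) := hd
  _ ≤ S.alpha j * ε := h2
  _ = ε * S.alpha j := by ring

lemma pullback_right (hsl : 1 < 1 / S.alpha S.kstar + 1 / S.beta S.kstar)
    {j : ℕ} {z : ℝ} (hj : S.kstar ≤ j) (hz : z ∈ Set.Ioo (S.r j) (S.q j))
    (hzp : z < S.p S.kstar) (hTz : S.T z ∈ S.Sig) : z ∈ S.Sig := by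
  have hj1 : 1 ≤ j := le_trans S.hkstar hj
  have hβ0 : (0:ℝ) < S.beta j := S.beta_pos hj1
  have hTz' : S.T z = S.beta j * (S.q j - z) := S.T_right hj1 ⟨le_of_lt hz.1, le_of_lt hz.2⟩
  have hTzlt : S.T z < S.p j := by
    rw [hTz']
    nlinarith [S.beta_mul j hj1, hz.1]
  rw [Sig, Metric.mem_closure_iff]
  intro ε hε
  have hmin : 0 < min ε (S.p S.kstar - z) := lt_min hε (by linarith)
  have hε' : 0 < min (S.beta j * min ε (S.p S.kstar - z)) (S.p j - S.T z) :=
    lt_min (mul_pos hβ0 hmin) (by linarith)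
  obtain ⟨ω, hω, hd⟩ := Metric.mem_closure_iff.1 hTz _ hε'
  rw [Real.dist_eq] at hd
  have hω0 : 0 ≤ ω := hω.1.1
  have hωp : ω ≤ S.p j := by
    have h1 := (abs_lt.1 hd).1
    have h2 := min_le_right (S.beta j * min ε (S.p S.kstar - z)) (S.p j - S.T z)
    linarith
  set v := S.q j - ω / S.beta j with hv
  have hvm : v ∈ Set.Icc (S.r j) (S.q j) := by
    constructor
    · simp only [hv]
      have h1 : ω / S.beta j ≤ S.p j / S.beta j := by gcongr
      have h2 : S.p j / S.beta j = S.q j - S.r j := by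
        rw [beta]
        field_simp
        exact mul_div_cancel_left₀ _ (ne_of_gt (S.hp_pos j))
      linarith
    · simp only [hv]
      have := div_nonneg hω0 (le_of_lt hβ0)
      linarith
  have hTv : S.T v = ω := by
    rw [S.T_right hj1 hvm]
    simp only [hv]
    field_simp
    ring
  have hvz : v - z = (S.T z - ω) / S.beta j := by
    simp only [hv]
    rw [hTz']
    field_simp
    ring
  have habs : |v - z| < min ε (S.p S.kstar - z) := by
    rw [hvz, abs_div, abs_of_pos hβ0, div_lt_iff₀ hβ0]
    calc |S.T z - ω| < min (S.beta j * min ε (S.p S.kstar - z)) (S.p j - S.T z) := hd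
    _ ≤ S.beta j * min ε (S.p S.kstar - z) := min_le_left _ _
    _ = min ε (S.p S.kstar - z) * S.beta j := by ring
  have hvΩ : v ∈ S.Omega := by
    apply S.Omega_back ⟨?_, ?_⟩ (by rw [hTv]; exact hω)
    · have h1 : 0 < S.r j := S.hr_pos j
      have := hvm.1
      linarith
    · have h1 := (abs_lt.1 habs).2
      have h2 := min_le_right ε (S.p S.kstar - z)
      linarith
  refine ⟨v, hvΩ, ?_⟩
  rw [Real.dist_eq, abs_sub_comm]
  exact lt_of_lt_of_le habs (min_le_left _ _)

/-- If `x ∈ J*` is not in `Σ` but maps into `Σ`, then `x` is a peak `r m`, `m ≥ kstar + 1`. -/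
lemma eq_peak (hsl : 1 < 1 / S.alpha S.kstar + 1 / S.beta S.kstar)
    {x : ℝ} (hx : x ∈ S.Jstar) (hxS : x ∉ S.Sig) (hTx : S.T x ∈ S.Sig) :
    ∃ m, S.kstar + 1 ≤ m ∧ x = S.r m := by
  have hx0 : (0:ℝ) ≠ x := by
    intro h
    exact hxS (subset_closure (h ▸ S.zero_mem_Omega))
  have hxpos : 0 < x := lt_of_le_of_ne hx.1 hx0
  have hxq : x ≤ S.q S.kstar := le_trans hx.2 (le_of_lt (S.p_lt_q_star hsl))
  obtain ⟨j, hj, hj1, hj2⟩ := S.exists_tooth S.hkstar hxpos hxq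
  have hj1' : 1 ≤ j := le_trans S.hkstar hj
  have hxqj : x ≠ S.q j := by
    intro h
    apply hxS
    apply subset_closure
    exact S.mem_Omega_of_iter hx.1 hx.2 (le_refl 1)
      (by rw [Function.iterate_one, h, S.hTq j hj1'])
  have hxltq : x < S.q j := lt_of_le_of_ne hj2 hxqj
  rcases lt_trichotomy x (S.r j) with h | h | h
  · exact absurd (S.pullback_left hsl hj ⟨le_of_lt hj1, h⟩ hTx) hxS
  · refine ⟨j, ?_, h⟩
    rcases eq_or_lt_of_le hj with hjk | hjk
    · exfalso
      have : S.T x = S.p S.kstar := by rw [h, ← hjk, S.hTr]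
      have h2 := (S.Sig_sub_e hsl hTx).2
      rw [this] at h2
      exact absurd h2 (not_le.2 S.e_lt_p_star)
    · omega
  · rcases eq_or_lt_of_le hx.2 with hp | hp
    · exfalso
      have : S.T x = S.T (S.p S.kstar) := by rw [hp]
      have h2 := (S.Sig_sub_e hsl hTx).2
      rw [this] at h2
      exact absurd h2 (not_le.2 (S.Tp_gt_e hsl))
    · exact absurd (S.pullback_right hsl hj ⟨h, hxltq⟩ hp hTx) hxS

end SawMapSetup

namespace SawMapSetup

variable (S : SawMapSetup)

lemma one_lt_beta {j : ℕ} (hj : S.kstar + 1 ≤ j) : 1 < S.beta j := by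
  have hj1 : 1 ≤ j := by omega
  rw [beta, lt_div_iff₀ (S.qr_pos hj1)]
  have h1 := S.q_lt_p hj
  have h2 := S.hr_pos j
  linarith

lemma max_div_ge {X Y B1 B2 : ℝ} (hB1 : 0 < B1) (hB2 : 0 < B2) :
    (X + Y) / (B1 + B2) ≤ max (X / B1) (Y / B2) := by
  by_contra hc
  push_neg at hc
  have h1 : X / B1 < (X + Y) / (B1 + B2) := lt_of_le_of_lt (le_max_left _ _) hc
  have h2 : Y / B2 < (X + Y) / (B1 + B2) := lt_of_le_of_lt (le_max_right _ _) hc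
  rw [div_lt_iff₀ hB1] at h1
  rw [div_lt_iff₀ hB2] at h2
  have h3 : X + Y < (X + Y) / (B1 + B2) * (B1 + B2) := by linarith
  rw [div_mul_cancel₀ _ (ne_of_gt (add_pos hB1 hB2))] at h3
  linarith

set_option maxHeartbeats 1600000 in
/-- The expansion engine: there is no nondegenerate interval `[a,b] ⊆ (0, e kstar)`
disjoint from `Ω` containing a point whose entire forward orbit stays below `e kstar`. -/
lemma engine (hsl : 1 < 1 / S.alpha S.kstar + 1 / S.beta S.kstar)
    (a b y : ℝ) (hab : a < b) (ha : 0 < a) (hbe : b < S.e S.kstar)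
    (hy : y ∈ Set.Icc a b) (horb : ∀ n, S.T^[n] y < S.e S.kstar)
    (hdisj : ∀ ω ∈ S.Omega, ω ∉ Set.Icc a b) : False := by
  have hk := S.hkstar
  have heps := S.e_lt_p_star
  have hepos := S.e_pos hk
  have habJ : Set.Icc a b ⊆ S.Jstar := by
    intro w hw
    exact ⟨le_trans (le_of_lt ha) hw.1, le_trans hw.2 (by linarith)⟩
  set D := b - a with hDdef
  have hD : 0 < D := by rw [hDdef]; linarith
  obtain ⟨N, hN⟩ : ∃ N, ∀ j, N ≤ j → S.q j < D :=
    Filter.eventually_atTop.1 (S.hq_lim.eventually_lt_const hD)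
  set K := max N (S.kstar + 1) with hKdef
  have hKk : S.kstar + 1 ≤ K := le_max_right _ _
  have hne : (Finset.Icc (S.kstar + 1) K).Nonempty := ⟨S.kstar + 1, by
    rw [Finset.mem_Icc]; exact ⟨le_refl _, hKk⟩⟩
  obtain ⟨γ, hγ1, hγα, hγβ, hγg⟩ :
      ∃ γ : ℝ, 1 < γ ∧ (∀ j, S.kstar ≤ j → γ ≤ S.alpha j) ∧
        (∀ j, S.kstar + 1 ≤ j → γ ≤ S.beta j) ∧
        (∀ j, S.kstar + 1 ≤ j → j ≤ K → γ ≤ S.p j / (S.q j - S.q (j + 1))) := by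
    set gC := (Finset.Icc (S.kstar + 1) K).inf' hne
      (fun j => S.p j / (S.q j - S.q (j + 1))) with hgC
    refine ⟨min (min (S.alpha S.kstar) (S.beta (S.kstar + 1))) gC, ?_, ?_, ?_, ?_⟩
    · apply lt_min (lt_min (S.one_lt_alpha hk) (S.one_lt_beta (le_refl _)))
      rw [hgC, Finset.lt_inf'_iff]
      intro j hjm
      rw [Finset.mem_Icc] at hjm
      have hj1 : 1 ≤ j := by omega
      rw [lt_div_iff₀ (sub_pos.2 (S.q_succ_lt_q hj1)), one_mul]
      have h1 := S.q_lt_p (by omega : S.kstar + 1 ≤ j)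
      have h2 := S.hq_pos (j+1) (by omega)
      linarith
    · exact fun j hj =>
        le_trans (le_trans (min_le_left _ _) (min_le_left _ _)) (S.alpha_mono hj)
    · exact fun j hj =>
        le_trans (le_trans (min_le_left _ _) (min_le_right _ _)) (S.beta_mono (by omega) hj)
    · intro j h1 h2
      refine le_trans (min_le_right _ _) ?_
      rw [hgC]
      exact Finset.inf'_le _ (by rw [Finset.mem_Icc]; exact ⟨h1, h2⟩)
  have hγpos : (0:ℝ) < γ := lt_trans zero_lt_one hγ1
  -- The main induction: ever-growing intervals surjecting from [a,b]
  have main : ∀ n, ∃ u v : ℝ, u < v ∧ 0 < u ∧ v < S.e S.kstar ∧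
      S.T^[n] y ∈ Set.Icc u v ∧ D * γ ^ n ≤ v - u ∧
      (∀ w ∈ Set.Icc u v, ∃ s ∈ Set.Icc a b, S.T^[n] s = w) := by
    intro n
    induction n with
    | zero =>
      exact ⟨a, b, hab, ha, hbe, hy, by rw [pow_zero, mul_one], fun w hw => ⟨w, hw, rfl⟩⟩
    | succ m ih =>
      obtain ⟨u, v, huv, hu, hv, hyuv, hlen, hsurj⟩ := ih
      have hym := horb m
      have hym1 := horb (m+1)
      -- no Ω-point in [u,v]
      have hfree : ∀ w ∈ Set.Icc u v, w ∉ S.Omega := by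
        intro w hw hwΩ
        obtain ⟨s, hs, hsw⟩ := hsurj w hw
        exact hdisj s (S.Omega_back_iter hsl (habJ hs) m (by rw [hsw]; exact hwΩ)) hs
      -- tooth location of u
      have huq : u ≤ S.q S.kstar := by
        have h1 := S.e_lt_r_star
        have h2 := S.hrq S.kstar hk
        linarith
      obtain ⟨j, hjk, hju, hjq⟩ := S.exists_tooth hk hu huq
      have hj1 : 1 ≤ j := le_trans hk hjk
      -- v < q j
      have hvq : v < S.q j := by
        by_contra hc
        push_neg at hc
        refine hfree (S.q j) ⟨hjq, hc⟩ (S.mem_Omega_of_iter (le_of_lt (S.hq_pos j hj1))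
          (by linarith) (le_refl 1) ?_)
        rw [Function.iterate_one]
        exact S.hTq j hj1
      -- e j not in [u,v]
      have hejfree : S.e j ∉ Set.Icc u v := by
        intro hm
        rcases eq_or_lt_of_le hm.1 with hue | hue
        · -- u = e j ; then e j < v, need right approximants, j ≥ kstar+1
          have hjk1 : S.kstar + 1 ≤ j := by
            rcases eq_or_lt_of_le hjk with h | h
            · exfalso
              rw [← h] at hue
              have : u < S.e S.kstar := by linarith
              rw [← hue] at this
              exact lt_irrefl _ this
            · omega
          have hev : S.e j < v := by
            rcases eq_or_lt_of_le hm.2 with h | h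
            · exfalso
              have h1 : S.e j < S.e S.kstar := by
                have := S.e_le_e_star hjk
                rcases eq_or_lt_of_le this with h2 | h2
                · exfalso
                  have h3 : S.e j < S.r j := (S.he_mem j hj1).2
                  have h4 : S.r j < S.q j := S.hrq j hj1
                  have h5 : S.q j ≤ S.q (S.kstar + 1) := S.q_anti (by omega) hjk1
                  have h6 : S.q (S.kstar + 1) < S.e S.kstar := (S.he_mem S.kstar hk).1
                  linarith [h2]
                · exact h2
              rw [h] at h1
              linarith
            · exact h
          obtain ⟨ω, hωΩ, hω1, hω2⟩ := S.omega_right_approx hjk1 (sub_pos.2 hev)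
          exact hfree ω ⟨by linarith [hue], by linarith⟩ hωΩ
        · obtain ⟨ω, hωΩ, hω1, hω2⟩ := S.omega_left_approx hjk (sub_pos.2 hue)
          exact hfree ω ⟨by linarith, le_trans (le_of_lt hω2) hm.2⟩ hωΩ
      -- killer: any new interval reaching e kstar yields False
      have hkill : ∀ u' v' : ℝ, u' ≤ S.T^[m+1] y → S.e S.kstar ≤ v' →
          (∀ w ∈ Set.Icc u' v', ∃ s ∈ Set.Icc a b, S.T^[m+1] s = w) → False := by
        intro u' v' hu' hv' hs'
        have hu'e : u' < S.e S.kstar := lt_of_le_of_lt hu' hym1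
        obtain ⟨ω, hωΩ, hω1, hω2⟩ :=
          S.omega_left_approx (le_refl S.kstar) (sub_pos.2 hu'e)
        obtain ⟨s, hs, hsw⟩ := hs' ω ⟨by linarith, by linarith⟩
        exact hdisj s (S.Omega_back_iter hsl (habJ hs) (m+1) (by rw [hsw]; exact hωΩ)) hs
      have hαj : (0:ℝ) < S.alpha j := S.alpha_pos hj1
      have hβj : (0:ℝ) < S.beta j := S.beta_pos hj1
      have hαm := S.alpha_mul j hj1
      have hβm := S.beta_mul j hj1
      have hvu0 : (0:ℝ) < v - u := by linarith
      have hDγ : 0 < D * γ ^ m := mul_pos hD (pow_pos hγpos m)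
      rcases le_or_gt v (S.r j) with hvr | hvr
      · -- Case A : [u,v] in the increasing branch
        have hTw : ∀ w, w ∈ Set.Icc u v → S.T w = S.alpha j * (w - S.q (j+1)) := by
          intro w hw
          exact S.T_left hj1 ⟨by linarith [hw.1], le_trans hw.2 hvr⟩
        set U := S.alpha j * (u - S.q (j+1)) with hU
        set V := S.alpha j * (v - S.q (j+1)) with hV
        have hUV : U < V := by
          rw [hU, hV]
          have := mul_lt_mul_of_pos_left huv hαj
          nlinarith
        have hU0 : 0 < U := mul_pos hαj (by linarith)
        have hsurj' : ∀ w ∈ Set.Icc U V, ∃ s ∈ Set.Icc a b, S.T^[m+1] s = w := by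
          intro w hw
          set s' := S.q (j+1) + w / S.alpha j with hs'
          have hs'm : s' ∈ Set.Icc u v := by
            rw [hs']
            constructor
            · have : U / S.alpha j ≤ w / S.alpha j := by gcongr; exact hw.1
              rw [hU] at this
              rw [mul_comm, mul_div_assoc, div_self (ne_of_gt hαj), mul_one] at this
              linarith
            · have : w / S.alpha j ≤ V / S.alpha j := by gcongr; exact hw.2
              rw [hV] at this
              rw [mul_comm, mul_div_assoc, div_self (ne_of_gt hαj), mul_one] at this
              linarith
          obtain ⟨s, hs, hsm⟩ := hsurj s' hs'm
          refine ⟨s, hs, ?_⟩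
          rw [Function.iterate_succ_apply', hsm, hTw s' hs'm, hs']
          field_simp
          ring
        have hymem : S.T^[m+1] y ∈ Set.Icc U V := by
          rw [Function.iterate_succ_apply', hTw _ hyuv, hU, hV]
          constructor
          · exact mul_le_mul_of_nonneg_left (by linarith [hyuv.1]) (le_of_lt hαj)
          · exact mul_le_mul_of_nonneg_left (by linarith [hyuv.2]) (le_of_lt hαj)
        have hVe : V < S.e S.kstar := by
          by_contra hc
          push_neg at hc
          exact hkill U V hymem.1 hc hsurj'
        refine ⟨U, V, hUV, hU0, hVe, hymem, ?_, hsurj'⟩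
        have hγa := hγα j hjk
        have h1 : V - U = S.alpha j * (v - u) := by rw [hU, hV]; ring
        rw [h1, pow_succ, ← mul_assoc]
        calc D * γ ^ m * γ ≤ (v - u) * γ := by
              exact mul_le_mul_of_nonneg_right hlen (le_of_lt hγpos)
        _ ≤ (v - u) * S.alpha j := by
              exact mul_le_mul_of_nonneg_left hγa (le_of_lt hvu0)
        _ = S.alpha j * (v - u) := by ring
      · have hjk1 : S.kstar + 1 ≤ j := by
          rcases eq_or_lt_of_le hjk with h | h
          · exfalso
            have h1 : S.e S.kstar < S.r S.kstar := S.e_lt_r_star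
            rw [← h] at hvr
            linarith
          · omega
        rcases le_or_gt (S.r j) u with hur | hur
        · -- Case B : [u,v] in the decreasing branch
          have hTw : ∀ w, w ∈ Set.Icc u v → S.T w = S.beta j * (S.q j - w) := by
            intro w hw
            exact S.T_right hj1 ⟨le_trans hur hw.1, by linarith [hw.2]⟩
          set U := S.beta j * (S.q j - v) with hU
          set V := S.beta j * (S.q j - u) with hV
          have hUV : U < V := by rw [hU, hV]; nlinarith
          have hU0 : 0 < U := mul_pos hβj (by linarith)
          have hsurj' : ∀ w ∈ Set.Icc U V, ∃ s ∈ Set.Icc a b, S.T^[m+1] s = w := by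
            intro w hw
            set s' := S.q j - w / S.beta j with hs'
            have hs'm : s' ∈ Set.Icc u v := by
              rw [hs']
              constructor
              · have : w / S.beta j ≤ V / S.beta j := by gcongr; exact hw.2
                rw [hV, mul_comm, mul_div_assoc, div_self (ne_of_gt hβj), mul_one] at this
                linarith
              · have : U / S.beta j ≤ w / S.beta j := by gcongr; exact hw.1
                rw [hU, mul_comm, mul_div_assoc, div_self (ne_of_gt hβj), mul_one] at this
                linarith
            obtain ⟨s, hs, hsm⟩ := hsurj s' hs'm
            refine ⟨s, hs, ?_⟩
            rw [Function.iterate_succ_apply', hsm, hTw s' hs'm, hs']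
            field_simp
            ring
          have hymem : S.T^[m+1] y ∈ Set.Icc U V := by
            rw [Function.iterate_succ_apply', hTw _ hyuv, hU, hV]
            constructor
            · exact mul_le_mul_of_nonneg_left (by linarith [hyuv.2]) (le_of_lt hβj)
            · exact mul_le_mul_of_nonneg_left (by linarith [hyuv.1]) (le_of_lt hβj)
          have hVe : V < S.e S.kstar := by
            by_contra hc
            push_neg at hc
            exact hkill U V hymem.1 hc hsurj'
          refine ⟨U, V, hUV, hU0, hVe, hymem, ?_, hsurj'⟩
          have hγb := hγβ j hjk1
          have h1 : V - U = S.beta j * (v - u) := by rw [hU, hV]; ring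
          rw [h1, pow_succ, ← mul_assoc]
          calc D * γ ^ m * γ ≤ (v - u) * γ := by
                exact mul_le_mul_of_nonneg_right hlen (le_of_lt hγpos)
          _ ≤ (v - u) * S.beta j := by
                exact mul_le_mul_of_nonneg_left hγb (le_of_lt hvu0)
          _ = S.beta j * (v - u) := by ring
        · -- Case C : straddle
          have hA : S.T u = S.alpha j * (u - S.q (j+1)) :=
            S.T_left hj1 ⟨le_of_lt hju, le_of_lt hur⟩
          have hB : S.T v = S.beta j * (S.q j - v) :=
            S.T_right hj1 ⟨le_of_lt hvr, le_of_lt hvq⟩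
          set A := S.alpha j * (u - S.q (j+1)) with hAd
          set B := S.beta j * (S.q j - v) with hBd
          set U := min A B with hU
          have hU0 : 0 < U := lt_min (mul_pos hαj (by linarith)) (mul_pos hβj (by linarith))
          have hAp : A < S.p j := by nlinarith
          have hBp : B < S.p j := by nlinarith
          have hUV : U < S.p j := lt_of_le_of_lt (min_le_left _ _) hAp
          have hsurj' : ∀ w ∈ Set.Icc U (S.p j), ∃ s ∈ Set.Icc a b, S.T^[m+1] s = w := by
            intro w hw
            rcases le_or_gt A w with hAw | hAw
            · set s' := S.q (j+1) + w / S.alpha j with hs'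
              have hs'm : s' ∈ Set.Icc u (S.r j) := by
                rw [hs']
                constructor
                · have : A / S.alpha j ≤ w / S.alpha j := by gcongr
                  rw [hAd, mul_comm, mul_div_assoc, div_self (ne_of_gt hαj), mul_one] at this
                  linarith
                · have : w / S.alpha j ≤ S.p j / S.alpha j := by gcongr; exact hw.2
                  rw [← hαm, mul_comm, mul_div_assoc, div_self (ne_of_gt hαj), mul_one] at this
                  linarith
              have hs'uv : s' ∈ Set.Icc u v := ⟨hs'm.1, le_trans hs'm.2 (le_of_lt hvr)⟩
              obtain ⟨s, hs, hsm⟩ := hsurj s' hs'uv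
              refine ⟨s, hs, ?_⟩
              rw [Function.iterate_succ_apply', hsm,
                S.T_left hj1 ⟨by linarith [hs'm.1, hju], hs'm.2⟩, hs']
              field_simp
              ring
            · have hBw : B ≤ w := by
                rcases le_total A B with h | h
                · exfalso
                  rw [hU, min_eq_left h] at hw
                  linarith [hw.1]
                · rw [hU, min_eq_right h] at hw
                  exact hw.1
              set s' := S.q j - w / S.beta j with hs'
              have hs'm : s' ∈ Set.Icc (S.r j) v := by
                rw [hs']
                constructor
                · have : w / S.beta j ≤ S.p j / S.beta j := by gcongr; exact hw.2
                  rw [← hβm, mul_comm, mul_div_assoc, div_self (ne_of_gt hβj), mul_one] at this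
                  linarith
                · have : B / S.beta j ≤ w / S.beta j := by gcongr
                  rw [hBd, mul_comm, mul_div_assoc, div_self (ne_of_gt hβj), mul_one] at this
                  linarith
              have hs'uv : s' ∈ Set.Icc u v := ⟨le_trans (le_of_lt hur) hs'm.1, hs'm.2⟩
              obtain ⟨s, hs, hsm⟩ := hsurj s' hs'uv
              refine ⟨s, hs, ?_⟩
              rw [Function.iterate_succ_apply', hsm,
                S.T_right hj1 ⟨hs'm.1, by linarith [hs'm.2]⟩, hs']
              field_simp
              ring
          have hymem : S.T^[m+1] y ∈ Set.Icc U (S.p j) := by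
            rw [Function.iterate_succ_apply']
            rcases le_or_gt (S.T^[m] y) (S.r j) with h | h
            · rw [S.T_left hj1 ⟨by linarith [hyuv.1], h⟩]
              constructor
              · refine le_trans (min_le_left _ _) ?_
                rw [hAd]
                exact mul_le_mul_of_nonneg_left (by linarith [hyuv.1]) (le_of_lt hαj)
              · calc S.alpha j * (S.T^[m] y - S.q (j+1))
                    ≤ S.alpha j * (S.r j - S.q (j+1)) :=
                      mul_le_mul_of_nonneg_left (by linarith) (le_of_lt hαj)
                _ = S.p j := hαm
            · rw [S.T_right hj1 ⟨le_of_lt h, by linarith [hyuv.2]⟩]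
              constructor
              · refine le_trans (min_le_right _ _) ?_
                rw [hBd]
                exact mul_le_mul_of_nonneg_left (by linarith [hyuv.2]) (le_of_lt hβj)
              · calc S.beta j * (S.q j - S.T^[m] y)
                    ≤ S.beta j * (S.q j - S.r j) :=
                      mul_le_mul_of_nonneg_left (by linarith) (le_of_lt hβj)
                _ = S.p j := hβm
          have hpe : S.p j < S.e S.kstar := by
            by_contra hc
            push_neg at hc
            exact hkill U (S.p j) hymem.1 hc hsurj'
          refine ⟨U, S.p j, hUV, hU0, hpe, hymem, ?_, hsurj'⟩
          -- length growth via the mediant inequality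
          have hjK : j ≤ K := by
            by_contra hc
            push_neg at hc
            have h1 : S.q j < D := hN j (by omega)
            have h2 : D * γ ^ m ≥ D * 1 := by
              apply mul_le_mul_of_nonneg_left _ (le_of_lt hD)
              calc (1:ℝ) = 1 ^ m := (one_pow m).symm
              _ ≤ γ ^ m := pow_le_pow_left₀ zero_le_one (le_of_lt hγ1) m
            have h3 : v - u < S.q j := by
              have := S.hq_pos (j+1) (by omega)
              linarith
            linarith [hlen]
          have hγgj := hγg j hjk1 hjK
          have hqq : 0 < S.q j - S.q (j+1) := sub_pos.2 (S.q_succ_lt_q hj1)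
          have hrqj : 0 < S.r j - S.q (j+1) := S.rq_pos hj1
          have hqrj : 0 < S.q j - S.r j := S.qr_pos hj1
          have hmed := max_div_ge (X := S.r j - u) (Y := v - S.r j) hrqj hqrj
          have hsum : (S.r j - u) + (v - S.r j) = v - u := by ring
          have hBsum : (S.r j - S.q (j+1)) + (S.q j - S.r j) = S.q j - S.q (j+1) := by ring
          rw [hsum, hBsum] at hmed
          have hppos := S.hp_pos j
          -- p j - U = max (p j - A) (p j - B) ≥ p j * ((v-u)/(q j - q (j+1)))
          have hPU : S.p j - U = max (S.p j - A) (S.p j - B) := by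
            rcases le_total A B with h | h
            · rw [hU, min_eq_left h, max_eq_left (by linarith)]
            · rw [hU, min_eq_right h, max_eq_right (by linarith)]
          have hPA : S.p j - A = S.p j * ((S.r j - u) / (S.r j - S.q (j+1))) := by
            rw [hAd]
            rw [mul_div_assoc']
            rw [eq_div_iff (ne_of_gt hrqj)]
            nlinarith
          have hPB : S.p j - B = S.p j * ((v - S.r j) / (S.q j - S.r j)) := by
            rw [hBd, mul_div_assoc', eq_div_iff (ne_of_gt hqrj)]
            nlinarith
          have hmax : S.p j * ((v - u) / (S.q j - S.q (j+1))) ≤ S.p j - U := by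
            rw [hPU, hPA, hPB, ← mul_max_of_nonneg _ _ (le_of_lt hppos)]
            exact mul_le_mul_of_nonneg_left hmed (le_of_lt hppos)
          have hgj : S.p j / (S.q j - S.q (j+1)) * (v - u) =
              S.p j * ((v - u) / (S.q j - S.q (j+1))) := by
            field_simp
          calc D * γ ^ (m+1) = D * γ ^ m * γ := by rw [pow_succ]; ring
          _ ≤ (v - u) * γ := mul_le_mul_of_nonneg_right hlen (le_of_lt hγpos)
          _ ≤ (v - u) * (S.p j / (S.q j - S.q (j+1))) :=
              mul_le_mul_of_nonneg_left hγgj (le_of_lt hvu0)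
          _ = S.p j * ((v - u) / (S.q j - S.q (j+1))) := by rw [← hgj]; ring
          _ ≤ S.p j - U := hmax
  -- final contradiction : lengths are unbounded but trapped in (0, e kstar)
  obtain ⟨n, hn⟩ := pow_unbounded_of_one_lt (S.e S.kstar / D) hγ1
  obtain ⟨u, v, huv, hu, hv, _, hlen, _⟩ := main n
  rw [div_lt_iff₀ hD] at hn
  nlinarith [hlen]

end SawMapSetup

set_option maxHeartbeats 800000 in
/-- Under the saw map setup, if `1/α kstar + 1/β kstar > 1` and `x ∈ J*` satisfies `x ∉ Σ`
but `T x ∈ Σ`, then `x` is a local maximum point of `T` and some iterate of `x` equals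
`e kstar`. -/
theorem preimage_of_Sig (S : SawMapSetup)
    (hslope : 1 < 1 / S.alpha S.kstar + 1 / S.beta S.kstar)
    (x : ℝ) (hx : x ∈ S.Jstar) (hxS : x ∉ S.Sig) (hTx : S.T x ∈ S.Sig) :
    (∃ δ > 0, ∀ y ∈ Set.Icc 0 (S.r 0), |y - x| < δ → S.T y ≤ S.T x) ∧
    ∃ n : ℕ, S.T^[n] x = S.e S.kstar := by
  obtain ⟨m, hmk, hxm⟩ := S.eq_peak hslope hx hxS hTx
  subst hxm
  have hk := S.hkstar
  have hm1 : 1 ≤ m := by omega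
  have hα := S.alpha_pos hm1
  have hβ := S.beta_pos hm1
  have hαm := S.alpha_mul m hm1
  have hβm := S.beta_mul m hm1
  have hpm : S.T (S.r m) = S.p m := S.hTr m
  constructor
  · -- r m is a local maximum point of T
    refine ⟨min (S.r m - S.q (m+1)) (S.q m - S.r m),
      lt_min (S.rq_pos hm1) (S.qr_pos hm1), ?_⟩
    intro y _ hyd
    have habs := abs_lt.1 hyd
    have hd1 := min_le_left (S.r m - S.q (m+1)) (S.q m - S.r m)
    have hd2 := min_le_right (S.r m - S.q (m+1)) (S.q m - S.r m)
    have hy1 : S.q (m+1) < y := by linarith [habs.1]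
    have hy2 : y < S.q m := by linarith [habs.2]
    rw [hpm]
    rcases le_or_gt y (S.r m) with h | h
    · rw [S.T_left hm1 ⟨le_of_lt hy1, h⟩]
      calc S.alpha m * (y - S.q (m+1)) ≤ S.alpha m * (S.r m - S.q (m+1)) :=
            mul_le_mul_of_nonneg_left (by linarith) (le_of_lt hα)
      _ = S.p m := hαm
    · rw [S.T_right hm1 ⟨le_of_lt h, le_of_lt hy2⟩]
      calc S.beta m * (S.q m - y) ≤ S.beta m * (S.q m - S.r m) :=
            mul_le_mul_of_nonneg_left (by linarith) (le_of_lt hβ)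
      _ = S.p m := hβm
  · -- some iterate of r m equals e kstar
    by_contra hno
    push_neg at hno
    have hpmS : S.p m ∈ S.Sig := by rw [← hpm]; exact hTx
    have hpme : S.p m ≤ S.e S.kstar := (S.Sig_sub_e hslope hpmS).2
    have hpmne : S.p m ≠ S.e S.kstar := by
      intro h
      exact hno 1 (by rw [Function.iterate_one, hpm, h])
    have hpmlt : S.p m < S.e S.kstar := lt_of_le_of_ne hpme hpmne
    have hp0 := S.hp_pos m
    have hra : S.p m / S.alpha m = S.r m - S.q (m+1) := by
      rw [SawMapSetup.alpha]
      field_simp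
    by_cases hcase : ∀ δ, 0 < δ → ∃ ω ∈ S.Omega, S.p m - δ < ω ∧ ω < S.p m
    · -- Ω accumulates at p m from below : then r m ∈ Σ, contradiction
      exfalso
      apply hxS
      rw [SawMapSetup.Sig, Metric.mem_closure_iff]
      intro ε hε
      obtain ⟨ω, hωΩ, hω1, hω2⟩ := hcase (S.alpha m * ε) (mul_pos hα hε)
      have hω0 : 0 ≤ ω := hωΩ.1.1
      set v := S.q (m+1) + ω / S.alpha m with hvdef
      have hvm : v ∈ Set.Icc (S.q (m+1)) (S.r m) := by
        constructor
        · rw [hvdef]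
          have := div_nonneg hω0 (le_of_lt hα)
          linarith
        · rw [hvdef]
          have h1 : ω / S.alpha m ≤ S.p m / S.alpha m := by gcongr
          rw [hra] at h1
          linarith
      have hTv : S.T v = ω := by
        rw [S.T_left hm1 hvm, hvdef]
        field_simp
        ring
      have hvΩ : v ∈ S.Omega := by
        apply S.Omega_back ⟨?_, ?_⟩ (by rw [hTv]; exact hωΩ)
        · exact le_trans (le_of_lt (S.hq_pos (m+1) (by omega))) hvm.1
        · exact le_trans hvm.2 hx.2
      refine ⟨v, hvΩ, ?_⟩
      have hrv : S.r m - v = (S.p m - ω) / S.alpha m := by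
        rw [hvdef, sub_div, hra]
        ring
      rw [Real.dist_eq, hrv, abs_of_pos (div_pos (by linarith) hα), div_lt_iff₀ hα]
      have : ε * S.alpha m = S.alpha m * ε := mul_comm _ _
      linarith
    · -- Ω misses (p m - δ, p m] : run the expansion engine
      push_neg at hcase
      obtain ⟨δ, hδ, hδΩ⟩ := hcase
      have hpΩ : S.p m ∉ S.Omega := by
        intro h
        exact hxS (subset_closure (S.Omega_back hx (by rw [hpm]; exact h)))
      have hmin : 0 < min δ (S.p m) := lt_min hδ hp0
      have hminδ : min δ (S.p m) ≤ δ := min_le_left _ _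
      have hminp : min δ (S.p m) ≤ S.p m := min_le_right _ _
      refine S.engine hslope (S.p m - min δ (S.p m) / 2) (S.p m) (S.p m)
        (by linarith) (by linarith) hpmlt ⟨by linarith, le_refl _⟩ ?_ ?_
      · intro n
        have h1 : S.T^[n] (S.p m) ∈ S.Sig := by
          have h2 := S.Sig_iter_fwd hslope hTx n
          rw [hpm] at h2
          exact h2
        have h2 := (S.Sig_sub_e hslope h1).2
        have h3 : S.T^[n] (S.p m) ≠ S.e S.kstar := by
          intro heq
          apply hno (n+1)
          rw [Function.iterate_succ_apply, hpm, heq]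
        exact lt_of_le_of_ne h2 h3
      · intro ω hωΩ hmem
        rcases eq_or_lt_of_le hmem.2 with h | h
        · exact hpΩ (h ▸ hωΩ)
        · have h1 : S.p m - δ < ω := by linarith [hmem.1]
          exact absurd h (not_lt.2 (hδΩ ω hωΩ h1))
end
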